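/- arXiv:0904.2759 — 2 statements merged into one kernel-verified Lean document; each statement's English description precedes it below -/
import Mathlib

section
/- Let f : {0,1}^n → {0,1} and, for each j ∈ [n], let f_j : {0,1}^m → {0,1}. Define g : {0,1}^m → {0,1} by g(x) = f(f_1(x), f_2(x), …, f_n(x)). Let P be a span program on n variables computing f_P = f, and for each j ∈ [n] let P_j be a span program on m variables computing f_{P_j} = f_j. Then there exists a span program Q on m variables computing f_Q = g such that for every cost vector s ∈ [0,∞)^m, setting r_j = wsize_s(P_j, {0,1}^m) for j ∈ [n], one has wsize_s(Q, {0,1}^m) ≤ wsize_r(P, {0,1}^n). In particular, wsize_s(Q, {0,1}^m) ≤ wsize(P, {0,1}^n) · max_{j∈[n]} wsize_s(P_j, {0,1}^m). -/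
open scoped ComplexInnerProductSpace

/-- A span program on `n` boolean variables: an inner product space `ℂ^d`, a target vector,
and input vectors indexed by `Fin m`, each either free (`label i = none`) or labeled by a
pair `(j, b)` (`label i = some (j, b)`, meaning `i ∈ I_{j,b}`). -/
structure SpanProgram (n : ℕ) : Type where
  d : ℕ
  m : ℕ
  label : Fin m → Option (Fin n × Bool)
  target : EuclideanSpace ℂ (Fin d)
  input : Fin m → EuclideanSpace ℂ (Fin d)

namespace SpanProgram

variable {n : ℕ}

/-- Input vector `i` is available on input `x`: it is free, or labeled `(j, x_j)` for some `j`. -/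
def avail (P : SpanProgram n) (x : Fin n → Bool) (i : Fin P.m) : Prop :=
  P.label i = none ∨ ∃ j : Fin n, P.label i = some (j, x j)

instance (P : SpanProgram n) (x : Fin n → Bool) (i : Fin P.m) : Decidable (P.avail x i) :=
  inferInstanceAs (Decidable (P.label i = none ∨ ∃ j : Fin n, P.label i = some (j, x j)))

/-- The boolean function computed by `P`:  `f_P(x) = 1` iff the target is in the range of
`A ∘ Π(x)`, i.e. the target is a linear combination of the available input vectors. -/
def eval (P : SpanProgram n) (x : Fin n → Bool) : Prop :=
  ∃ w : Fin P.m → ℂ, ∑ i, (if P.avail x i then w i else 0) • P.input i = P.target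

/-- The squared cost weight of coordinate `i`:  `s j` if `i ∈ I_{j,b}`, and `0` if `i` is free.
Thus `‖S w‖² = ∑ i, P.cw s i * ‖w i‖²`. -/
def cw (P : SpanProgram n) (s : Fin n → ℝ) (i : Fin P.m) : ℝ :=
  match P.label i with
  | none => 0
  | some jb => s jb.1

open Classical in
/-- The witness size of `P` on input `x` with costs `s`. -/
noncomputable def wsizex (P : SpanProgram n) (s : Fin n → ℝ) (x : Fin n → Bool) : ℝ :=
  if P.eval x then
    sInf { r : ℝ | ∃ w : Fin P.m → ℂ,
      (∑ i, (if P.avail x i then w i else 0) • P.input i = P.target) ∧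
      r = ∑ i, P.cw s i * ‖w i‖ ^ 2 }
  else
    sInf { r : ℝ | ∃ w' : EuclideanSpace ℂ (Fin P.d), ⟪P.target, w'⟫ = 1 ∧
      (∀ i, P.avail x i → ⟪P.input i, w'⟫ = 0) ∧
      r = ∑ i, P.cw s i * ‖⟪P.input i, w'⟫‖ ^ 2 }

/-- The witness size of `P` with costs `s`, restricted to the domain `D`:
`max_{x ∈ D} wsize_s(P, x)`. -/
noncomputable def wsizeD (P : SpanProgram n) (s : Fin n → ℝ) (D : Set (Fin n → Bool)) : ℝ :=
  sSup { r : ℝ | ∃ x ∈ D, r = P.wsizex s x }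

end SpanProgram

/-! ### Auxiliary development -/

noncomputable section


namespace SpanProgram

variable {n : ℕ}

/-- A "true witness" for `P` on `x`. -/
def IsTrueWit (P : SpanProgram n) (x : Fin n → Bool) (w : Fin P.m → ℂ) : Prop :=
  ∑ i, (if P.avail x i then w i else 0) • P.input i = P.target

/-- A "false witness" for `P` on `x`. -/
def IsFalseWit (P : SpanProgram n) (x : Fin n → Bool) (w' : EuclideanSpace ℂ (Fin P.d)) : Prop :=
  ⟪P.target, w'⟫ = 1 ∧ ∀ i, P.avail x i → ⟪P.input i, w'⟫ = 0

noncomputable def tCost (P : SpanProgram n) (s : Fin n → ℝ) (w : Fin P.m → ℂ) : ℝ :=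
  ∑ i, P.cw s i * ‖w i‖ ^ 2

noncomputable def fCost (P : SpanProgram n) (s : Fin n → ℝ) (w' : EuclideanSpace ℂ (Fin P.d)) : ℝ :=
  ∑ i, P.cw s i * ‖⟪P.input i, w'⟫‖ ^ 2

lemma cw_nonneg (P : SpanProgram n) {s : Fin n → ℝ} (hs : ∀ k, 0 ≤ s k) (i : Fin P.m) :
    0 ≤ P.cw s i := by
  unfold cw; rcases h : P.label i with - | jb <;> simp [hs]

lemma tCost_nonneg (P : SpanProgram n) {s : Fin n → ℝ} (hs : ∀ k, 0 ≤ s k) (w : Fin P.m → ℂ) :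
    0 ≤ P.tCost s w :=
  Finset.sum_nonneg fun i _ => mul_nonneg (P.cw_nonneg hs i) (by positivity)

lemma fCost_nonneg (P : SpanProgram n) {s : Fin n → ℝ} (hs : ∀ k, 0 ≤ s k)
    (w' : EuclideanSpace ℂ (Fin P.d)) : 0 ≤ P.fCost s w' :=
  Finset.sum_nonneg fun i _ => mul_nonneg (P.cw_nonneg hs i) (by positivity)

open Classical in
lemma wsizex_true (P : SpanProgram n) (s : Fin n → ℝ) {x : Fin n → Bool} (h : P.eval x) :
    P.wsizex s x = sInf { r : ℝ | ∃ w, P.IsTrueWit x w ∧ r = P.tCost s w } := by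
  rw [wsizex, if_pos h]; rfl

open Classical in
lemma wsizex_false (P : SpanProgram n) (s : Fin n → ℝ) {x : Fin n → Bool} (h : ¬ P.eval x) :
    P.wsizex s x = sInf { r : ℝ | ∃ w', P.IsFalseWit x w' ∧ r = P.fCost s w' } := by
  rw [wsizex, if_neg h]
  congr 1
  ext r
  constructor
  · rintro ⟨w', h1, h2, h3⟩; exact ⟨w', ⟨h1, h2⟩, h3⟩
  · rintro ⟨w', ⟨h1, h2⟩, h3⟩; exact ⟨w', h1, h2, h3⟩

lemma ofLp_congr {d : ℕ} {a b : EuclideanSpace ℂ (Fin d)} (h : a = b) (k : Fin d) : a k = b k := by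
  rw [h]

/-- a false witness contradicts evaluation to true -/
lemma not_eval_of_falseWit {P : SpanProgram n} {x : Fin n → Bool}
    {w' : EuclideanSpace ℂ (Fin P.d)} (hw : P.IsFalseWit x w') : ¬ P.eval x := by
  rintro ⟨w, hw'⟩
  have : ⟪P.target, w'⟫ = 0 := by
    rw [← hw', sum_inner]
    refine Finset.sum_eq_zero fun i _ => ?_
    by_cases h : P.avail x i
    · rw [if_pos h, inner_smul_left, hw.2 i h, mul_zero]
    · rw [if_neg h, zero_smul, inner_zero_left]
  rw [hw.1] at this
  exact one_ne_zero this

/-- if `P` does not evaluate to true, a false witness exists. -/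
lemma exists_falseWit {P : SpanProgram n} {x : Fin n → Bool} (h : ¬ P.eval x) :
    ∃ w', P.IsFalseWit x w' := by
  classical
  set v : Fin P.m → EuclideanSpace ℂ (Fin P.d) :=
    fun i => if P.avail x i then P.input i else 0 with hv
  set W : Submodule ℂ (EuclideanSpace ℂ (Fin P.d)) := Submodule.span ℂ (Set.range v) with hW
  have ht : P.target ∉ W := by
    intro hmem
    rw [hW, Submodule.mem_span_range_iff_exists_fun] at hmem
    obtain ⟨c, hc⟩ := hmem
    refine h ⟨c, ?_⟩
    rw [← hc]
    refine Finset.sum_congr rfl fun i _ => ?_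
    by_cases hi : P.avail x i <;> simp [hv, hi]
  set u : EuclideanSpace ℂ (Fin P.d) := P.target - (W.orthogonalProjectionOnto P.target : _) with hu
  have huW : u ∈ Wᗮ := Submodule.sub_starProjection_mem_orthogonal (K := W) _
  have hune : u ≠ 0 := by
    intro h0
    apply ht
    have : P.target = (W.orthogonalProjectionOnto P.target : _) := by
      have := sub_eq_zero.mp (hu ▸ h0)
      exact this
    rw [this]; exact Submodule.coe_mem _
  have htu : ⟪P.target, u⟫ = (‖u‖ : ℂ) ^ 2 := by
    have hdecomp : P.target = (W.orthogonalProjectionOnto P.target : _) + u := by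
      rw [hu]; abel
    rw [hdecomp, inner_add_left]
    rw [huW _ (Submodule.coe_mem _), zero_add, inner_self_eq_norm_sq_to_K]
    norm_cast
  refine ⟨((‖u‖ : ℂ) ^ 2)⁻¹ • u, ?_, ?_⟩
  · rw [inner_smul_right, htu]
    have : (‖u‖ : ℂ) ^ 2 ≠ 0 := by
      simpa using hune
    field_simp
    exact div_self (by exact_mod_cast norm_ne_zero_iff.mpr hune)
  · intro i hi
    rw [inner_smul_right]
    have hvW : P.input i ∈ W := by
      have : v i = P.input i := by simp [hv, hi]
      rw [← this]
      exact Submodule.subset_span (Set.mem_range_self i)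
    rw [huW _ hvW, mul_zero]

end SpanProgram
namespace SpanProgram

variable {n : ℕ}

lemma wsizex_nonneg (P : SpanProgram n) {s : Fin n → ℝ} (hs : ∀ k, 0 ≤ s k)
    (x : Fin n → Bool) : 0 ≤ P.wsizex s x := by
  by_cases h : P.eval x
  · rw [P.wsizex_true s h]
    exact Real.sInf_nonneg (by rintro r ⟨w, -, rfl⟩; exact P.tCost_nonneg hs w)
  · rw [P.wsizex_false s h]
    exact Real.sInf_nonneg (by rintro r ⟨w', -, rfl⟩; exact P.fCost_nonneg hs w')

lemma wsizex_le_tCost (P : SpanProgram n) {s : Fin n → ℝ} (hs : ∀ k, 0 ≤ s k)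
    {x : Fin n → Bool} {w : Fin P.m → ℂ} (hw : P.IsTrueWit x w) :
    P.wsizex s x ≤ P.tCost s w := by
  rw [P.wsizex_true s ⟨w, hw⟩]
  exact csInf_le ⟨0, by rintro r ⟨w0, -, rfl⟩; exact P.tCost_nonneg hs w0⟩ ⟨w, hw, rfl⟩

lemma wsizex_le_fCost (P : SpanProgram n) {s : Fin n → ℝ} (hs : ∀ k, 0 ≤ s k)
    {x : Fin n → Bool} (h : ¬ P.eval x) {w' : EuclideanSpace ℂ (Fin P.d)}
    (hw : P.IsFalseWit x w') : P.wsizex s x ≤ P.fCost s w' := by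
  rw [P.wsizex_false s h]
  exact csInf_le ⟨0, by rintro r ⟨w0, -, rfl⟩; exact P.fCost_nonneg hs w0⟩ ⟨w', hw, rfl⟩

lemma exists_trueWit_cost_lt (P : SpanProgram n) {s : Fin n → ℝ} (hs : ∀ k, 0 ≤ s k)
    {x : Fin n → Bool} (h : P.eval x) {ε : ℝ} (hε : 0 < ε) :
    ∃ w, P.IsTrueWit x w ∧ P.tCost s w < P.wsizex s x + ε := by
  obtain ⟨w0, hw0⟩ := h
  have hlt : sInf { r : ℝ | ∃ w, P.IsTrueWit x w ∧ r = P.tCost s w } < P.wsizex s x + ε := by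
    rw [P.wsizex_true s ⟨w0, hw0⟩]
    exact lt_add_of_pos_right _ hε
  have hne : { r : ℝ | ∃ w, P.IsTrueWit x w ∧ r = P.tCost s w }.Nonempty :=
    ⟨P.tCost s w0, w0, hw0, rfl⟩
  obtain ⟨r, ⟨w, hw, rfl⟩, hr⟩ := exists_lt_of_csInf_lt hne hlt
  exact ⟨w, hw, hr⟩

lemma exists_falseWit_cost_lt (P : SpanProgram n) {s : Fin n → ℝ} (hs : ∀ k, 0 ≤ s k)
    {x : Fin n → Bool} (h : ¬ P.eval x) {ε : ℝ} (hε : 0 < ε) :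
    ∃ w', P.IsFalseWit x w' ∧ P.fCost s w' < P.wsizex s x + ε := by
  obtain ⟨w0, hw0⟩ := exists_falseWit h
  have hlt : sInf { r : ℝ | ∃ w', P.IsFalseWit x w' ∧ r = P.fCost s w' } < P.wsizex s x + ε := by
    rw [P.wsizex_false s h]
    exact lt_add_of_pos_right _ hε
  have hne : { r : ℝ | ∃ w', P.IsFalseWit x w' ∧ r = P.fCost s w' }.Nonempty :=
    ⟨P.fCost s w0, w0, hw0, rfl⟩
  obtain ⟨r, ⟨w, hw, rfl⟩, hr⟩ := exists_lt_of_csInf_lt hne hlt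
  exact ⟨w, hw, hr⟩

lemma wsizeD_set_eq (P : SpanProgram n) (s : Fin n → ℝ) :
    { r : ℝ | ∃ x ∈ Set.univ, r = P.wsizex s x } = Set.range (P.wsizex s) := by
  ext r; simp [eq_comm]

lemma wsizex_le_wsizeD (P : SpanProgram n) (s : Fin n → ℝ) (x : Fin n → Bool) :
    P.wsizex s x ≤ P.wsizeD s Set.univ := by
  rw [wsizeD, wsizeD_set_eq]
  exact le_csSup (Set.finite_range _).bddAbove (Set.mem_range_self x)

lemma wsizeD_nonneg (P : SpanProgram n) {s : Fin n → ℝ} (hs : ∀ k, 0 ≤ s k) :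
    0 ≤ P.wsizeD s Set.univ :=
  le_trans (P.wsizex_nonneg hs (fun _ => false)) (P.wsizex_le_wsizeD s _)

lemma wsizeD_le (P : SpanProgram n) (s : Fin n → ℝ) {c : ℝ} (hc : 0 ≤ c)
    (h : ∀ x, P.wsizex s x ≤ c) : P.wsizeD s Set.univ ≤ c :=
  Real.sSup_le (by rintro r ⟨x, -, rfl⟩; exact h x) hc

/-- Scaling comparison between two cost vectors. -/
lemma wsizex_le_mul {P : SpanProgram n} {r : Fin n → ℝ} {M : ℝ} (hM : 0 ≤ M)
    (hr0 : ∀ j, 0 ≤ r j) (hrM : ∀ j, r j ≤ M) (x : Fin n → Bool) :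
    P.wsizex r x ≤ M * P.wsizex (fun _ => 1) x := by
  have h1 : ∀ k : Fin n, 0 ≤ (1:ℝ) := fun _ => zero_le_one
  have hcw : ∀ i, P.cw r i ≤ M * P.cw (fun _ => 1) i := by
    intro i
    unfold cw
    rcases h : P.label i with - | jb <;> simp [hrM]
  refine le_of_forall_pos_le_add fun ε hε => ?_
  have hδ : (0:ℝ) < ε / (M + 1) := by positivity
  by_cases h : P.eval x
  · obtain ⟨w, hw, hwc⟩ := P.exists_trueWit_cost_lt h1 h hδ
    calc P.wsizex r x ≤ P.tCost r w := P.wsizex_le_tCost hr0 hw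
      _ ≤ M * P.tCost (fun _ => 1) w := by
          rw [tCost, tCost, Finset.mul_sum]
          exact Finset.sum_le_sum fun i _ => by
            rw [← mul_assoc]
            exact mul_le_mul_of_nonneg_right (hcw i) (by positivity)
      _ ≤ M * (P.wsizex (fun _ => 1) x + ε / (M + 1)) :=
          mul_le_mul_of_nonneg_left hwc.le hM
      _ ≤ M * P.wsizex (fun _ => 1) x + ε := by
          rw [mul_add]
          have : M * (ε / (M + 1)) ≤ ε := by
            rw [div_eq_inv_mul, ← mul_assoc]
            calc M * (M+1)⁻¹ * ε ≤ 1 * ε := by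
                  refine mul_le_mul_of_nonneg_right ?_ hε.le
                  rw [mul_inv_le_iff₀ (by positivity), one_mul]; linarith
              _ = ε := one_mul ε
          linarith
  · obtain ⟨w, hw, hwc⟩ := P.exists_falseWit_cost_lt h1 h hδ
    calc P.wsizex r x ≤ P.fCost r w := P.wsizex_le_fCost hr0 h hw
      _ ≤ M * P.fCost (fun _ => 1) w := by
          rw [fCost, fCost, Finset.mul_sum]
          exact Finset.sum_le_sum fun i _ => by
            rw [← mul_assoc]
            exact mul_le_mul_of_nonneg_right (hcw i) (by positivity)
      _ ≤ M * (P.wsizex (fun _ => 1) x + ε / (M + 1)) :=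
          mul_le_mul_of_nonneg_left hwc.le hM
      _ ≤ M * P.wsizex (fun _ => 1) x + ε := by
          rw [mul_add]
          have : M * (ε / (M + 1)) ≤ ε := by
            rw [div_eq_inv_mul, ← mul_assoc]
            calc M * (M+1)⁻¹ * ε ≤ 1 * ε := by
                  refine mul_le_mul_of_nonneg_right ?_ hε.le
                  rw [mul_inv_le_iff₀ (by positivity), one_mul]; linarith
              _ = ε := one_mul ε
          linarith

end SpanProgram
namespace SpanProgram

variable {n : ℕ}

lemma avail_of_none {P : SpanProgram n} {x : Fin n → Bool} {i : Fin P.m}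
    (h : P.label i = none) : P.avail x i := Or.inl h

lemma avail_some_iff {P : SpanProgram n} {x : Fin n → Bool} {i : Fin P.m} {j : Fin n} {b : Bool}
    (h : P.label i = some (j, b)) : P.avail x i ↔ x j = b := by
  constructor
  · rintro (h0 | ⟨j', hj'⟩)
    · rw [h] at h0; exact absurd h0 (by simp)
    · rw [h] at hj'
      obtain ⟨rfl, hb⟩ := Prod.mk.injEq .. ▸ Option.some_injective _ hj'
      exact hb.symm
  · intro hb
    exact Or.inr ⟨j, by rw [h, hb]⟩

lemma cw_of_none {P : SpanProgram n} {s : Fin n → ℝ} {i : Fin P.m}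
    (h : P.label i = none) : P.cw s i = 0 := by unfold cw; rw [h]

lemma cw_of_some {P : SpanProgram n} {s : Fin n → ℝ} {i : Fin P.m} {j : Fin n} {b : Bool}
    (h : P.label i = some (j, b)) : P.cw s i = s j := by unfold cw; rw [h]

/-! ### The dual span program -/

/-- The dual span program, computing the negation of `P` with the same witness sizes. -/
@[reducible]
noncomputable def dual (P : SpanProgram n) : SpanProgram n where
  d := P.m + 1
  m := P.d + P.m
  label a :=
    Sum.elim (fun _ => none)
      (fun i => (P.label i).map (fun jb : Fin n × Bool => (jb.1, !jb.2)))
      (finSumFinEquiv.symm a)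
  target := WithLp.toLp 2 (fun c : Fin (P.m + 1) => Fin.lastCases (motive := fun _ => ℂ) 1 (fun _ => 0) c)
  input a :=
    Sum.elim
      (fun k => WithLp.toLp 2 fun c : Fin (P.m + 1) =>
        Fin.lastCases (motive := fun _ => ℂ) ((starRingEnd ℂ) (P.target k))
          (fun i => (starRingEnd ℂ) (P.input i k)) c)
      (fun i => WithLp.toLp 2 fun c : Fin (P.m + 1) =>
        Fin.lastCases (motive := fun _ => ℂ) 0
          (fun i' => if P.label i = none then (0:ℂ) else if i' = i then 1 else 0) c)
      (finSumFinEquiv.symm a)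

variable (P : SpanProgram n)

@[simp] lemma dual_label_inl (k : Fin P.d) :
    (dual P).label (finSumFinEquiv (Sum.inl k)) = none := by
  simp [dual]

@[simp] lemma dual_label_inr (i : Fin P.m) :
    (dual P).label (finSumFinEquiv (Sum.inr i)) = (P.label i).map (fun jb : Fin n × Bool => (jb.1, !jb.2)) := by
  simp [dual]

@[simp] lemma dual_input_inl_last (k : Fin P.d) :
    (dual P).input (finSumFinEquiv (Sum.inl k)) (Fin.last P.m) = (starRingEnd ℂ) (P.target k) := by
  simp [dual]

@[simp] lemma dual_input_inl_cast (k : Fin P.d) (i : Fin P.m) :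
    (dual P).input (finSumFinEquiv (Sum.inl k)) (Fin.castSucc i) = (starRingEnd ℂ) (P.input i k) := by
  simp [dual]

@[simp] lemma dual_input_inr_last (i : Fin P.m) :
    (dual P).input (finSumFinEquiv (Sum.inr i)) (Fin.last P.m) = 0 := by
  simp [dual]

@[simp] lemma dual_input_inr_cast (i i' : Fin P.m) :
    (dual P).input (finSumFinEquiv (Sum.inr i)) (Fin.castSucc i')
      = if P.label i = none then (0:ℂ) else if i' = i then 1 else 0 := by
  simp [dual]

@[simp] lemma dual_target_last : (dual P).target (Fin.last P.m) = 1 := by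
  simp [dual]

@[simp] lemma dual_target_cast (i : Fin P.m) : (dual P).target (Fin.castSucc i) = 0 := by
  simp [dual]

variable {x : Fin n → Bool}

lemma dual_avail_inl (k : Fin P.d) : (dual P).avail x (finSumFinEquiv (Sum.inl k)) :=
  avail_of_none (dual_label_inl P k)

lemma dual_avail_inr_none {i : Fin P.m} (h : P.label i = none) :
    (dual P).avail x (finSumFinEquiv (Sum.inr i)) :=
  avail_of_none (by rw [dual_label_inr, h]; rfl)

lemma dual_avail_inr_some {i : Fin P.m} {j : Fin n} {b : Bool} (h : P.label i = some (j, b)) :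
    (dual P).avail x (finSumFinEquiv (Sum.inr i)) ↔ ¬ P.avail x i := by
  have h' : (dual P).label (finSumFinEquiv (Sum.inr i)) = some (j, !b) := by
    rw [dual_label_inr, h]; rfl
  rw [avail_some_iff h', avail_some_iff h]
  cases b <;> cases x j <;> simp

lemma dual_cw_inl (s : Fin n → ℝ) (k : Fin P.d) :
    (dual P).cw s (finSumFinEquiv (Sum.inl k)) = 0 :=
  cw_of_none (dual_label_inl P k)

lemma dual_cw_inr (s : Fin n → ℝ) (i : Fin P.m) :
    (dual P).cw s (finSumFinEquiv (Sum.inr i)) = P.cw s i := by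
  rcases h : P.label i with - | ⟨j, b⟩
  · rw [cw_of_none (by rw [dual_label_inr, h]; rfl), cw_of_none h]
  · rw [cw_of_some (show (dual P).label _ = some (j, !b) by rw [dual_label_inr, h]; rfl),
      cw_of_some h]

end SpanProgram
namespace SpanProgram

variable {n : ℕ} (P : SpanProgram n) {x : Fin n → Bool}

/-- Splitting a sum over the index set of the dual program. -/
lemma sum_dual_split {α : Type*} [AddCommMonoid α] (h : Fin ((dual P).m) → α) :
    ∑ a, h a = ∑ k, h (finSumFinEquiv (Sum.inl k)) + ∑ i, h (finSumFinEquiv (Sum.inr i)) :=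
  calc ∑ a, h a = ∑ u : Fin P.d ⊕ Fin P.m, h (finSumFinEquiv u) :=
        (Fintype.sum_equiv finSumFinEquiv _ h (fun _ => rfl)).symm
    _ = _ := Fintype.sum_sum_type _

lemma falseWit_of_dual_trueWit {w : Fin ((dual P).m) → ℂ}
    (hw : (dual P).IsTrueWit x w) :
    P.IsFalseWit x (WithLp.toLp 2 fun k => w (finSumFinEquiv (Sum.inl k))) := by
  set w' : EuclideanSpace ℂ (Fin P.d) := WithLp.toLp 2 fun k => w (finSumFinEquiv (Sum.inl k)) with hw'
  have hcoord : ∀ c : Fin (P.m + 1),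
      ∑ a, (if (dual P).avail x a then w a else 0) * (dual P).input a c
        = (dual P).target c := by
    intro c
    have := ofLp_congr hw c
    rw [WithLp.ofLp_sum, Finset.sum_apply] at this
    exact this
  have hcast : ∀ i : Fin P.m,
      ⟪P.input i, w'⟫ + (if P.label i = none then 0 else
        (if (dual P).avail x (finSumFinEquiv (Sum.inr i)) then w (finSumFinEquiv (Sum.inr i)) else 0)) = 0 := by
    intro i
    have h2 := hcoord (Fin.castSucc i)
    rw [sum_dual_split] at h2
    have e1 : ∑ k, (if (dual P).avail x (finSumFinEquiv (Sum.inl k)) then w (finSumFinEquiv (Sum.inl k)) else 0)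
        * (dual P).input (finSumFinEquiv (Sum.inl k)) (Fin.castSucc i) = ⟪P.input i, w'⟫ := by
      simp only [PiLp.inner_apply, RCLike.inner_apply]
      refine Finset.sum_congr rfl fun k _ => ?_
      rw [if_pos (dual_avail_inl P k), dual_input_inl_cast, mul_comm]
    have e2 : ∑ i', (if (dual P).avail x (finSumFinEquiv (Sum.inr i')) then w (finSumFinEquiv (Sum.inr i')) else 0)
        * (dual P).input (finSumFinEquiv (Sum.inr i')) (Fin.castSucc i)
        = (if P.label i = none then 0 else
        (if (dual P).avail x (finSumFinEquiv (Sum.inr i)) then w (finSumFinEquiv (Sum.inr i)) else 0)) := by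
      rw [Finset.sum_eq_single i]
      · rw [dual_input_inr_cast, if_pos rfl]
        by_cases hl : P.label i = none
        · simp [hl]
        · simp [hl, mul_comm]
      · intro i' _ hne
        rw [dual_input_inr_cast]
        by_cases hl : P.label i' = none
        · simp [hl]
        · rw [if_neg hl, if_neg (Ne.symm hne), mul_zero]
      · intro h; exact absurd (Finset.mem_univ i) h
    rw [e1, e2, dual_target_cast] at h2
    exact h2
  constructor
  · have hlast := hcoord (Fin.last P.m)
    rw [sum_dual_split] at hlast
    have e1 : ∑ k, (if (dual P).avail x (finSumFinEquiv (Sum.inl k)) then w (finSumFinEquiv (Sum.inl k)) else 0)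
        * (dual P).input (finSumFinEquiv (Sum.inl k)) (Fin.last P.m) = ⟪P.target, w'⟫ := by
      simp only [PiLp.inner_apply, RCLike.inner_apply]
      refine Finset.sum_congr rfl fun k _ => ?_
      rw [if_pos (dual_avail_inl P k), dual_input_inl_last, mul_comm]
    have e2 : ∑ i, (if (dual P).avail x (finSumFinEquiv (Sum.inr i)) then w (finSumFinEquiv (Sum.inr i)) else 0)
        * (dual P).input (finSumFinEquiv (Sum.inr i)) (Fin.last P.m) = 0 := by
      refine Finset.sum_eq_zero fun i _ => ?_
      rw [dual_input_inr_last, mul_zero]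
    rw [e1, e2, dual_target_last, add_zero] at hlast
    exact hlast
  · intro i hi
    have h2 := hcast i
    rcases hl : P.label i with - | ⟨j, b⟩
    · rw [if_pos hl, add_zero] at h2; exact h2
    · rw [if_neg (by rw [hl]; simp),
        if_neg ((not_iff_not.mpr (dual_avail_inr_some P hl)).mpr (not_not_intro hi)),
        add_zero] at h2
      exact h2

lemma dual_trueWit_of_falseWit (s : Fin n → ℝ) {w' : EuclideanSpace ℂ (Fin P.d)}
    (hw : P.IsFalseWit x w') :
    ∃ w : Fin ((dual P).m) → ℂ, (dual P).IsTrueWit x w ∧ (dual P).tCost s w = P.fCost s w' := by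
  classical
  set w : Fin ((dual P).m) → ℂ :=
    fun a => Sum.elim (fun k => w' k) (fun i => -⟪P.input i, w'⟫) (finSumFinEquiv.symm a) with hwdef
  have hwl : ∀ k, w (finSumFinEquiv (Sum.inl k)) = w' k := by
    intro k; rw [hwdef]; simp
  have hwr : ∀ i, w (finSumFinEquiv (Sum.inr i)) = -⟪P.input i, w'⟫ := by
    intro i; rw [hwdef]; simp
  refine ⟨w, ?_, ?_⟩
  · ext c
    rw [WithLp.ofLp_sum, Finset.sum_apply, sum_dual_split]
    have key : ∀ a : Fin ((dual P).m),
        ((if (dual P).avail x a then w a else 0) • (dual P).input a) c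
        = (if (dual P).avail x a then w a else 0) * (dual P).input a c := fun _ => rfl
    induction c using Fin.lastCases with
    | last =>
      have e1 : ∑ k, ((if (dual P).avail x (finSumFinEquiv (Sum.inl k)) then w (finSumFinEquiv (Sum.inl k)) else 0)
          • (dual P).input (finSumFinEquiv (Sum.inl k))) (Fin.last P.m) = ⟪P.target, w'⟫ := by
        simp only [PiLp.inner_apply, RCLike.inner_apply]
        refine Finset.sum_congr rfl fun k _ => ?_
        rw [key, if_pos (dual_avail_inl P k), dual_input_inl_last, hwl, mul_comm]
      have e2 : ∑ i, ((if (dual P).avail x (finSumFinEquiv (Sum.inr i)) then w (finSumFinEquiv (Sum.inr i)) else 0)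
          • (dual P).input (finSumFinEquiv (Sum.inr i))) (Fin.last P.m) = 0 := by
        refine Finset.sum_eq_zero fun i _ => ?_
        rw [key, dual_input_inr_last, mul_zero]
      rw [e1, e2, add_zero, hw.1, dual_target_last]
    | cast i =>
      have e1 : ∑ k, ((if (dual P).avail x (finSumFinEquiv (Sum.inl k)) then w (finSumFinEquiv (Sum.inl k)) else 0)
          • (dual P).input (finSumFinEquiv (Sum.inl k))) (Fin.castSucc i) = ⟪P.input i, w'⟫ := by
        simp only [PiLp.inner_apply, RCLike.inner_apply]
        refine Finset.sum_congr rfl fun k _ => ?_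
        rw [key, if_pos (dual_avail_inl P k), dual_input_inl_cast, hwl, mul_comm]
      have e2 : ∑ i', ((if (dual P).avail x (finSumFinEquiv (Sum.inr i')) then w (finSumFinEquiv (Sum.inr i')) else 0)
          • (dual P).input (finSumFinEquiv (Sum.inr i'))) (Fin.castSucc i) = -⟪P.input i, w'⟫ := by
        rw [Finset.sum_eq_single i]
        · rw [key, dual_input_inr_cast, if_pos rfl, hwr]
          by_cases hl : P.label i = none
          · rw [if_pos hl, mul_zero, eq_comm, neg_eq_zero]
            exact hw.2 i (avail_of_none hl)
          · rw [if_neg hl, mul_one]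
            obtain ⟨⟨j, b⟩, hl2⟩ := Option.ne_none_iff_exists'.mp hl
            by_cases ha : P.avail x i
            · rw [if_neg ((not_iff_not.mpr (dual_avail_inr_some P hl2)).mpr (not_not_intro ha)),
                hw.2 i ha, neg_zero]
            · rw [if_pos ((dual_avail_inr_some P hl2).mpr ha)]
        · intro i' _ hne
          rw [key, dual_input_inr_cast]
          by_cases hl : P.label i' = none
          · rw [if_pos hl, mul_zero]
          · rw [if_neg hl, if_neg (Ne.symm hne), mul_zero]
        · intro h; exact absurd (Finset.mem_univ i) h
      rw [e1, e2, add_neg_cancel, dual_target_cast]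
  · rw [tCost, fCost, sum_dual_split]
    have e1 : ∑ k : Fin P.d, (dual P).cw s (finSumFinEquiv (Sum.inl k))
        * ‖w (finSumFinEquiv (Sum.inl k))‖ ^ 2 = 0 := by
      refine Finset.sum_eq_zero fun k _ => ?_
      rw [dual_cw_inl, zero_mul]
    rw [e1, zero_add]
    refine Finset.sum_congr rfl fun i _ => ?_
    rw [dual_cw_inr, hwr, norm_neg]

lemma sum_duald_split {α : Type*} [AddCommMonoid α] (h : Fin ((dual P).d) → α) :
    ∑ c, h c = ∑ i : Fin P.m, h (Fin.castSucc i) + h (Fin.last P.m) :=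
  Fin.sum_univ_castSucc h

lemma dual_falseWit_of_trueWit (s : Fin n → ℝ) (hs : ∀ k, 0 ≤ s k) {w : Fin P.m → ℂ}
    (hw : P.IsTrueWit x w) :
    ∃ z : EuclideanSpace ℂ (Fin ((dual P).d)), (dual P).IsFalseWit x z ∧
      (dual P).fCost s z ≤ P.tCost s w := by
  classical
  set z : EuclideanSpace ℂ (Fin (P.m + 1)) :=
    WithLp.toLp 2 fun c => Fin.lastCases (motive := fun _ => ℂ) 1 (fun i => -(if P.avail x i then w i else 0)) c with hz
  have hzlast : z (Fin.last P.m) = 1 := by rw [hz]; simp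
  have hzcast : ∀ i, z (Fin.castSucc i) = -(if P.avail x i then w i else 0) := by
    intro i; rw [hz]; simp
  have hcoord := ofLp_congr hw
  have hGz : ∀ i, ⟪(dual P).input (finSumFinEquiv (Sum.inr i)), z⟫
      = if P.label i = none then 0 else z (Fin.castSucc i) := by
    intro i
    simp -proj only [PiLp.inner_apply, RCLike.inner_apply']
    rw [sum_duald_split P (fun c => (starRingEnd ℂ) ((dual P).input (finSumFinEquiv (Sum.inr i)) c) * z c)]
    rw [dual_input_inr_last, map_zero, zero_mul, add_zero]
    by_cases hl : P.label i = none
    · rw [if_pos hl]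
      refine Finset.sum_eq_zero fun i' _ => ?_
      rw [dual_input_inr_cast, if_pos hl, map_zero, zero_mul]
    · rw [if_neg hl, Finset.sum_eq_single i]
      · rw [dual_input_inr_cast, if_neg hl, if_pos rfl, map_one, one_mul]
      · intro i' _ hne
        rw [dual_input_inr_cast, if_neg hl, if_neg hne, map_zero, zero_mul]
      · intro h; exact absurd (Finset.mem_univ i) h
  refine ⟨z, ⟨?_, ?_⟩, ?_⟩
  · simp -proj only [PiLp.inner_apply, RCLike.inner_apply']
    rw [sum_duald_split P (fun c => (starRingEnd ℂ) ((dual P).target c) * z c)]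
    rw [dual_target_last, hzlast, map_one, one_mul]
    rw [Finset.sum_eq_zero fun i _ => by rw [dual_target_cast, map_zero, zero_mul]]
    rw [zero_add]
  · intro a ha
    obtain ⟨u, rfl⟩ : ∃ u, finSumFinEquiv u = a := ⟨finSumFinEquiv.symm a, by simp⟩
    cases u with
    | inl k =>
      simp -proj only [PiLp.inner_apply, RCLike.inner_apply']
      rw [sum_duald_split P (fun c => (starRingEnd ℂ) ((dual P).input (finSumFinEquiv (Sum.inl k)) c) * z c)]
      rw [dual_input_inl_last, hzlast, mul_one, starRingEnd_self_apply]
      have e1 : ∑ i : Fin P.m,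
          (starRingEnd ℂ) ((dual P).input (finSumFinEquiv (Sum.inl k)) (Fin.castSucc i)) * z (Fin.castSucc i)
          = -(P.target k) := by
        have := hcoord k
        rw [WithLp.ofLp_sum, Finset.sum_apply] at this
        rw [← this, ← Finset.sum_neg_distrib]
        refine Finset.sum_congr rfl fun i _ => ?_
        rw [dual_input_inl_cast, hzcast, starRingEnd_self_apply]
        show _ = -((if P.avail x i then w i else 0) * P.input i k)
        ring
      rw [e1]
      ring
    | inr i =>
      rw [hGz i]
      by_cases hl : P.label i = none
      · rw [if_pos hl]
      · rw [if_neg hl, hzcast]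
        obtain ⟨⟨j, b⟩, hl2⟩ := Option.ne_none_iff_exists'.mp hl
        rw [if_neg ((dual_avail_inr_some P hl2).mp ha), neg_zero]
  · rw [tCost, fCost, sum_dual_split]
    have e1 : ∑ k : Fin P.d, (dual P).cw s (finSumFinEquiv (Sum.inl k))
        * ‖⟪(dual P).input (finSumFinEquiv (Sum.inl k)), z⟫‖ ^ 2 = 0 := by
      refine Finset.sum_eq_zero fun k _ => ?_
      rw [dual_cw_inl, zero_mul]
    rw [e1, zero_add]
    refine Finset.sum_le_sum fun i _ => ?_
    rw [dual_cw_inr, hGz i]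
    by_cases hl : P.label i = none
    · rw [if_pos hl, cw_of_none hl]
      simp
    · rw [if_neg hl, hzcast, norm_neg]
      refine mul_le_mul_of_nonneg_left ?_ (P.cw_nonneg hs i)
      by_cases ha : P.avail x i
      · rw [if_pos ha]
      · rw [if_neg ha, norm_zero]
        simpa using sq_nonneg ‖w i‖

end SpanProgram
namespace SpanProgram

variable {n : ℕ} (P : SpanProgram n) {x : Fin n → Bool}

lemma dual_eval_iff : (dual P).eval x ↔ ¬ P.eval x := by
  constructor
  · rintro ⟨w, hw⟩
    exact not_eval_of_falseWit (P.falseWit_of_dual_trueWit hw)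
  · intro h
    obtain ⟨w', hw'⟩ := exists_falseWit h
    obtain ⟨w, hw, -⟩ := P.dual_trueWit_of_falseWit (fun _ => 0) hw'
    exact ⟨w, hw⟩

variable {mvars : ℕ}

/-- The trivially-true span program. -/
noncomputable def trivTrue (mvars : ℕ) : SpanProgram mvars :=
  ⟨0, 0, Fin.elim0, 0, Fin.elim0⟩

lemma trivTrue_eval (x : Fin mvars → Bool) : (trivTrue mvars).eval x :=
  ⟨Fin.elim0, by ext k; exact Fin.elim0 k⟩

/-- The program to be substituted for input `i` of the outer program. -/
noncomputable def Rprog (Pj : Fin n → SpanProgram mvars) (P : SpanProgram n) (i : Fin P.m) :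
    SpanProgram mvars :=
  (P.label i).elim (trivTrue mvars)
    (fun jb => if jb.2 = true then Pj jb.1 else dual (Pj jb.1))

variable (Pj : Fin n → SpanProgram mvars)

lemma Rprog_none {i : Fin P.m} (hl : P.label i = none) :
    Rprog Pj P i = trivTrue mvars := by rw [Rprog, hl]; rfl

lemma Rprog_some_true {i : Fin P.m} {j : Fin n} (hl : P.label i = some (j, true)) :
    Rprog Pj P i = Pj j := by rw [Rprog, hl]; rfl

lemma Rprog_some_false {i : Fin P.m} {j : Fin n} (hl : P.label i = some (j, false)) :
    Rprog Pj P i = dual (Pj j) := by rw [Rprog, hl]; rfl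

lemma Rprog_eval_iff {fj : Fin n → (Fin mvars → Bool) → Bool} {x : Fin mvars → Bool}
    (hPj : ∀ j x, (Pj j).eval x ↔ fj j x = true) (i : Fin P.m) :
    (Rprog Pj P i).eval x ↔ P.avail (fun j => fj j x) i := by
  rcases hl : P.label i with - | ⟨j, b⟩
  · rw [Rprog_none P Pj hl]
    exact iff_of_true (trivTrue_eval x) (avail_of_none hl)
  · rw [avail_some_iff hl]
    cases b with
    | true => rw [Rprog_some_true P Pj hl]; exact hPj j x
    | false =>
      rw [Rprog_some_false P Pj hl, dual_eval_iff, hPj j x]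
      simp

lemma Rprog_trueWit_approx {s : Fin mvars → ℝ} (hs : ∀ k, 0 ≤ s k) {x : Fin mvars → Bool}
    {i : Fin P.m} {j : Fin n} {b : Bool} (hl : P.label i = some (j, b))
    (h : (Rprog Pj P i).eval x) {δ : ℝ} (hδ : 0 < δ) :
    ∃ γ : Fin ((Rprog Pj P i).m) → ℂ, (Rprog Pj P i).IsTrueWit x γ ∧
      (Rprog Pj P i).tCost s γ < (Pj j).wsizex s x + δ := by
  cases b with
  | true =>
    rw [Rprog_some_true P Pj hl] at h ⊢
    exact (Pj j).exists_trueWit_cost_lt hs h hδ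
  | false =>
    rw [Rprog_some_false P Pj hl] at h ⊢
    have hne : ¬ (Pj j).eval x := (dual_eval_iff (Pj j)).mp h
    obtain ⟨w', hw', hc⟩ := (Pj j).exists_falseWit_cost_lt hs hne hδ
    obtain ⟨γ, hγ, hceq⟩ := (Pj j).dual_trueWit_of_falseWit s hw'
    exact ⟨γ, hγ, by rw [hceq]; exact hc⟩

lemma Rprog_falseWit_approx {s : Fin mvars → ℝ} (hs : ∀ k, 0 ≤ s k) {x : Fin mvars → Bool}
    {i : Fin P.m} {j : Fin n} {b : Bool} (hl : P.label i = some (j, b))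
    (h : ¬ (Rprog Pj P i).eval x) {δ : ℝ} (hδ : 0 < δ) :
    ∃ z : EuclideanSpace ℂ (Fin ((Rprog Pj P i).d)), (Rprog Pj P i).IsFalseWit x z ∧
      (Rprog Pj P i).fCost s z < (Pj j).wsizex s x + δ := by
  cases b with
  | true =>
    rw [Rprog_some_true P Pj hl] at h ⊢
    exact (Pj j).exists_falseWit_cost_lt hs h hδ
  | false =>
    rw [Rprog_some_false P Pj hl] at h ⊢
    have he : (Pj j).eval x := by
      by_contra hne
      exact h (((Pj j).dual_eval_iff).mpr hne)
    obtain ⟨w, hw, hc⟩ := (Pj j).exists_trueWit_cost_lt hs he hδ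
    obtain ⟨z, hz, hcle⟩ := (Pj j).dual_falseWit_of_trueWit s hs hw
    exact ⟨z, hz, lt_of_le_of_lt hcle hc⟩

end SpanProgram
namespace SpanProgram

variable {n mvars : ℕ}

/-- The composed span program. -/
@[reducible]
noncomputable def comp (P : SpanProgram n) (Pj : Fin n → SpanProgram mvars) :
    SpanProgram mvars where
  d := Fintype.card (Fin P.d ⊕ Σ i : Fin P.m, Fin ((Rprog Pj P i).d))
  m := Fintype.card (Fin P.m ⊕ Σ i : Fin P.m, Fin ((Rprog Pj P i).m))
  label := fun a => Sum.elim (fun _ => none) (fun σ => (Rprog Pj P σ.1).label σ.2)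
    ((Fintype.equivFin _).symm a)
  target := WithLp.toLp 2 fun c => Sum.elim (fun k => P.target k) (fun _ => 0) ((Fintype.equivFin _).symm c)
  input := fun a => Sum.elim
    (fun i => WithLp.toLp 2 fun c => Sum.elim (fun k => P.input i k)
      (fun σ => -(Pi.single (M := fun i' => EuclideanSpace ℂ (Fin ((Rprog Pj P i').d))) i
        (Rprog Pj P i).target σ.1 σ.2))
      ((Fintype.equivFin _).symm c))
    (fun σ => WithLp.toLp 2 fun c => Sum.elim (fun _ => (0:ℂ))
      (fun τ => Pi.single (M := fun i' => EuclideanSpace ℂ (Fin ((Rprog Pj P i').d))) σ.1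
        ((Rprog Pj P σ.1).input σ.2) τ.1 τ.2)
      ((Fintype.equivFin _).symm c))
    ((Fintype.equivFin _).symm a)

variable (P : SpanProgram n) (Pj : Fin n → SpanProgram mvars)

/-- The index equivalence for the dimension of the composed program. -/
noncomputable def eDq : (Fin P.d ⊕ Σ i : Fin P.m, Fin ((Rprog Pj P i).d)) ≃ Fin ((comp P Pj).d) :=
  Fintype.equivFin _

/-- The index equivalence for the input set of the composed program. -/
noncomputable def eIq : (Fin P.m ⊕ Σ i : Fin P.m, Fin ((Rprog Pj P i).m)) ≃ Fin ((comp P Pj).m) :=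
  Fintype.equivFin _

@[simp] lemma comp_label_inl (i : Fin P.m) :
    (comp P Pj).label (eIq P Pj (Sum.inl i)) = none := by
  simp [comp, eIq]

@[simp] lemma comp_label_inr (σ : Σ i : Fin P.m, Fin ((Rprog Pj P i).m)) :
    (comp P Pj).label (eIq P Pj (Sum.inr σ)) = (Rprog Pj P σ.1).label σ.2 := by
  simp [comp, eIq]

@[simp] lemma comp_target_inl (k : Fin P.d) :
    (comp P Pj).target (eDq P Pj (Sum.inl k)) = P.target k := by
  simp [comp, eDq]

@[simp] lemma comp_target_inr (σ : Σ i : Fin P.m, Fin ((Rprog Pj P i).d)) :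
    (comp P Pj).target (eDq P Pj (Sum.inr σ)) = 0 := by
  simp [comp, eDq]

@[simp] lemma comp_input_inl_inl (i : Fin P.m) (k : Fin P.d) :
    (comp P Pj).input (eIq P Pj (Sum.inl i)) (eDq P Pj (Sum.inl k)) = P.input i k := by
  simp [comp, eIq, eDq]

@[simp] lemma comp_input_inl_inr (i : Fin P.m) (σ : Σ i : Fin P.m, Fin ((Rprog Pj P i).d)) :
    (comp P Pj).input (eIq P Pj (Sum.inl i)) (eDq P Pj (Sum.inr σ))
      = -(Pi.single (M := fun i' => EuclideanSpace ℂ (Fin ((Rprog Pj P i').d))) i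
          (Rprog Pj P i).target σ.1 σ.2) := by
  simp [comp, eIq, eDq]

@[simp] lemma comp_input_inr_inl (σ : Σ i : Fin P.m, Fin ((Rprog Pj P i).m)) (k : Fin P.d) :
    (comp P Pj).input (eIq P Pj (Sum.inr σ)) (eDq P Pj (Sum.inl k)) = 0 := by
  simp [comp, eIq, eDq]

@[simp] lemma comp_input_inr_inr (σ : Σ i : Fin P.m, Fin ((Rprog Pj P i).m))
    (τ : Σ i : Fin P.m, Fin ((Rprog Pj P i).d)) :
    (comp P Pj).input (eIq P Pj (Sum.inr σ)) (eDq P Pj (Sum.inr τ))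
      = Pi.single (M := fun i' => EuclideanSpace ℂ (Fin ((Rprog Pj P i').d))) σ.1
          ((Rprog Pj P σ.1).input σ.2) τ.1 τ.2 := by
  simp [comp, eIq, eDq]

lemma avail_iff_of_label_eq {n' : ℕ} {P' : SpanProgram n'} {Q' : SpanProgram n'}
    {x : Fin n' → Bool} {i : Fin P'.m} {i' : Fin Q'.m} (h : P'.label i = Q'.label i') :
    P'.avail x i ↔ Q'.avail x i' := by
  unfold avail; rw [h]

lemma cw_eq_of_label_eq {n' : ℕ} {P' : SpanProgram n'} {Q' : SpanProgram n'}
    {s : Fin n' → ℝ} {i : Fin P'.m} {i' : Fin Q'.m} (h : P'.label i = Q'.label i') :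
    P'.cw s i = Q'.cw s i' := by
  unfold cw; rw [h]

variable {x : Fin mvars → Bool}

lemma comp_avail_inl (i : Fin P.m) : (comp P Pj).avail x (eIq P Pj (Sum.inl i)) :=
  avail_of_none (comp_label_inl P Pj i)

lemma comp_avail_inr_iff (σ : Σ i : Fin P.m, Fin ((Rprog Pj P i).m)) :
    (comp P Pj).avail x (eIq P Pj (Sum.inr σ)) ↔ (Rprog Pj P σ.1).avail x σ.2 :=
  avail_iff_of_label_eq (comp_label_inr P Pj σ)

lemma comp_cw_inl (s : Fin mvars → ℝ) (i : Fin P.m) :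
    (comp P Pj).cw s (eIq P Pj (Sum.inl i)) = 0 :=
  cw_of_none (comp_label_inl P Pj i)

lemma comp_cw_inr (s : Fin mvars → ℝ) (σ : Σ i : Fin P.m, Fin ((Rprog Pj P i).m)) :
    (comp P Pj).cw s (eIq P Pj (Sum.inr σ)) = (Rprog Pj P σ.1).cw s σ.2 :=
  cw_eq_of_label_eq (comp_label_inr P Pj σ)

lemma sum_sigma_split {N : ℕ} {τ : Fin N → Type*} [∀ i, Fintype (τ i)] {α : Type*}
    [AddCommMonoid α] (h : (Σ i, τ i) → α) : ∑ σ, h σ = ∑ i, ∑ c, h ⟨i, c⟩ := by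
  rw [← Finset.univ_sigma_univ, Finset.sum_sigma]

lemma sum_compm_split {α : Type*} [AddCommMonoid α] (h : Fin ((comp P Pj).m) → α) :
    ∑ a, h a = ∑ i, h (eIq P Pj (Sum.inl i))
      + ∑ i, ∑ c, h (eIq P Pj (Sum.inr ⟨i, c⟩)) := by
  calc ∑ a, h a = ∑ u, h (eIq P Pj u) := (Fintype.sum_equiv (eIq P Pj) _ h (fun _ => rfl)).symm
    _ = ∑ i, h (eIq P Pj (Sum.inl i)) + ∑ σ, h (eIq P Pj (Sum.inr σ)) := Fintype.sum_sum_type _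
    _ = _ := by rw [sum_sigma_split]

lemma sum_compd_split {α : Type*} [AddCommMonoid α] (h : Fin ((comp P Pj).d) → α) :
    ∑ a, h a = ∑ k, h (eDq P Pj (Sum.inl k))
      + ∑ i, ∑ c, h (eDq P Pj (Sum.inr ⟨i, c⟩)) := by
  calc ∑ a, h a = ∑ u, h (eDq P Pj u) := (Fintype.sum_equiv (eDq P Pj) _ h (fun _ => rfl)).symm
    _ = ∑ k, h (eDq P Pj (Sum.inl k)) + ∑ σ, h (eDq P Pj (Sum.inr σ)) := Fintype.sum_sum_type _
    _ = _ := by rw [sum_sigma_split]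

end SpanProgram
namespace SpanProgram

variable {n mvars : ℕ}

lemma smul_apply'' (a : ℂ) {d : ℕ} (v : EuclideanSpace ℂ (Fin d)) (k : Fin d) :
    (a • v) k = a * v k := rfl

variable (P : SpanProgram n) (Pj : Fin n → SpanProgram mvars) {x : Fin mvars → Bool}

open Classical in
lemma comp_eval_aux :
    (comp P Pj).eval x ↔ ∃ w : Fin P.m → ℂ,
      ∑ i, (if (Rprog Pj P i).eval x then w i else 0) • P.input i = P.target := by
  constructor
  · rintro ⟨W, hW⟩
    have hcoord : ∀ c, ∑ a, (if (comp P Pj).avail x a then W a else 0) * (comp P Pj).input a c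
        = (comp P Pj).target c := by
      intro c
      have := ofLp_congr hW c
      rw [WithLp.ofLp_sum, Finset.sum_apply] at this
      exact this
    have hA : ∀ k, ∑ i, W (eIq P Pj (Sum.inl i)) * P.input i k = P.target k := by
      intro k
      have h := hcoord (eDq P Pj (Sum.inl k))
      rw [sum_compm_split] at h
      rw [Finset.sum_congr rfl (fun i _ => by
          rw [if_pos (comp_avail_inl P Pj i), comp_input_inl_inl]),
        Finset.sum_eq_zero (fun i _ => Finset.sum_eq_zero (fun c _ => by
          rw [comp_input_inr_inl, mul_zero])), add_zero, comp_target_inl] at h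
      exact h
    have hblock : ∀ (i : Fin P.m) (k' : Fin ((Rprog Pj P i).d)),
        ∑ c, (if (Rprog Pj P i).avail x c then W (eIq P Pj (Sum.inr ⟨i, c⟩)) else 0)
          * (Rprog Pj P i).input c k'
        = W (eIq P Pj (Sum.inl i)) * (Rprog Pj P i).target k' := by
      intro i k'
      have h := hcoord (eDq P Pj (Sum.inr ⟨i, k'⟩))
      rw [sum_compm_split] at h
      have e1 : ∑ i', (if (comp P Pj).avail x (eIq P Pj (Sum.inl i')) then W (eIq P Pj (Sum.inl i')) else 0)
          * (comp P Pj).input (eIq P Pj (Sum.inl i')) (eDq P Pj (Sum.inr ⟨i, k'⟩))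
          = -(W (eIq P Pj (Sum.inl i)) * (Rprog Pj P i).target k') := by
        rw [Finset.sum_eq_single i]
        · rw [if_pos (comp_avail_inl P Pj i), comp_input_inl_inr]
          rw [ofLp_congr (Pi.single_eq_same (M := fun i' => EuclideanSpace ℂ (Fin ((Rprog Pj P i').d))) i (Rprog Pj P i).target) k']
          ring
        · intro i' _ hne
          rw [comp_input_inl_inr,
            ofLp_congr (Pi.single_eq_of_ne (M := fun i'' => EuclideanSpace ℂ (Fin ((Rprog Pj P i'').d))) (Ne.symm hne) (Rprog Pj P i').target) k']
          show _ * -(0:ℂ) = 0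
          ring
        · intro h'; exact absurd (Finset.mem_univ i) h'
      have e2 : ∑ i', ∑ c, (if (comp P Pj).avail x (eIq P Pj (Sum.inr ⟨i', c⟩)) then W (eIq P Pj (Sum.inr ⟨i', c⟩)) else 0)
          * (comp P Pj).input (eIq P Pj (Sum.inr ⟨i', c⟩)) (eDq P Pj (Sum.inr ⟨i, k'⟩))
          = ∑ c, (if (Rprog Pj P i).avail x c then W (eIq P Pj (Sum.inr ⟨i, c⟩)) else 0)
            * (Rprog Pj P i).input c k' := by
        rw [Finset.sum_eq_single i]
        · refine Finset.sum_congr rfl fun c _ => ?_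
          rw [comp_input_inr_inr]
          rw [ofLp_congr (Pi.single_eq_same (M := fun i' => EuclideanSpace ℂ (Fin ((Rprog Pj P i').d))) i ((Rprog Pj P i).input c)) k']
          rw [if_congr (comp_avail_inr_iff P Pj ⟨i, c⟩) rfl rfl]
        · intro i' _ hne
          refine Finset.sum_eq_zero fun c _ => ?_
          rw [comp_input_inr_inr,
            ofLp_congr (Pi.single_eq_of_ne (M := fun i'' => EuclideanSpace ℂ (Fin ((Rprog Pj P i'').d))) (Ne.symm hne) ((Rprog Pj P i').input c)) k']
          show _ * (0:ℂ) = 0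
          ring
        · intro h'; exact absurd (Finset.mem_univ i) h'
      rw [e1, e2, comp_target_inr] at h
      linear_combination h
    have hB : ∀ i, ¬ (Rprog Pj P i).eval x → W (eIq P Pj (Sum.inl i)) = 0 := by
      intro i hne
      by_contra h0
      refine hne ⟨fun c => (W (eIq P Pj (Sum.inl i)))⁻¹ * W (eIq P Pj (Sum.inr ⟨i, c⟩)), ?_⟩
      ext k'
      rw [WithLp.ofLp_sum, Finset.sum_apply]
      show ∑ c, (if (Rprog Pj P i).avail x c then (W (eIq P Pj (Sum.inl i)))⁻¹ * W (eIq P Pj (Sum.inr ⟨i, c⟩)) else 0)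
        * (Rprog Pj P i).input c k' = (Rprog Pj P i).target k'
      have : ∀ c, (if (Rprog Pj P i).avail x c then (W (eIq P Pj (Sum.inl i)))⁻¹ * W (eIq P Pj (Sum.inr ⟨i, c⟩)) else 0)
          * (Rprog Pj P i).input c k'
          = (W (eIq P Pj (Sum.inl i)))⁻¹ * ((if (Rprog Pj P i).avail x c then W (eIq P Pj (Sum.inr ⟨i, c⟩)) else 0)
            * (Rprog Pj P i).input c k') := by
        intro c
        by_cases hc : (Rprog Pj P i).avail x c
        · rw [if_pos hc, if_pos hc]; ring
        · rw [if_neg hc, if_neg hc]; ring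
      rw [Finset.sum_congr rfl fun c _ => this c, ← Finset.mul_sum, hblock i k',
        ← mul_assoc, inv_mul_cancel₀ h0, one_mul]
    refine ⟨fun i => W (eIq P Pj (Sum.inl i)), ?_⟩
    ext k
    rw [WithLp.ofLp_sum, Finset.sum_apply]
    show ∑ i, (if (Rprog Pj P i).eval x then W (eIq P Pj (Sum.inl i)) else 0) * P.input i k
      = P.target k
    rw [← hA k]
    refine Finset.sum_congr rfl fun i _ => ?_
    by_cases he : (Rprog Pj P i).eval x
    · rw [if_pos he]
    · rw [if_neg he, hB i he, zero_mul]
  · rintro ⟨w, hw⟩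
    have hcoord : ∀ k, ∑ i, (if (Rprog Pj P i).eval x then w i else 0) * P.input i k
        = P.target k := by
      intro k
      have := ofLp_congr hw k
      rw [WithLp.ofLp_sum, Finset.sum_apply] at this
      exact this
    refine ⟨fun a => Sum.elim (fun i => if (Rprog Pj P i).eval x then w i else 0)
      (fun σ => if h : (Rprog Pj P σ.1).eval x then w σ.1 * h.choose σ.2 else 0)
      ((eIq P Pj).symm a), ?_⟩
    set W : Fin ((comp P Pj).m) → ℂ := fun a => Sum.elim (fun i => if (Rprog Pj P i).eval x then w i else 0)
      (fun σ => if h : (Rprog Pj P σ.1).eval x then w σ.1 * h.choose σ.2 else 0)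
      ((eIq P Pj).symm a) with hWdef
    have hWl : ∀ i, W (eIq P Pj (Sum.inl i)) = if (Rprog Pj P i).eval x then w i else 0 := by
      intro i; rw [hWdef]; simp
    have hWr : ∀ σ : Σ i : Fin P.m, Fin ((Rprog Pj P i).m),
        W (eIq P Pj (Sum.inr σ)) = if h : (Rprog Pj P σ.1).eval x then w σ.1 * h.choose σ.2 else 0 := by
      intro σ; rw [hWdef]; simp
    ext cc
    obtain ⟨u, rfl⟩ : ∃ u, eDq P Pj u = cc := ⟨(eDq P Pj).symm cc, Equiv.apply_symm_apply _ _⟩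
    rw [WithLp.ofLp_sum, Finset.sum_apply, sum_compm_split P Pj (fun a => ((if (comp P Pj).avail x a then W a else 0) • (comp P Pj).input a) (eDq P Pj u))]
    cases u with
    | inl k =>
      have e1 : ∑ i, ((if (comp P Pj).avail x (eIq P Pj (Sum.inl i)) then W (eIq P Pj (Sum.inl i)) else 0)
          • (comp P Pj).input (eIq P Pj (Sum.inl i))) (eDq P Pj (Sum.inl k)) = P.target k := by
        rw [← hcoord k]
        refine Finset.sum_congr rfl fun i _ => ?_
        rw [smul_apply'', if_pos (comp_avail_inl P Pj i), comp_input_inl_inl, hWl]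
      have e2 : ∑ i, ∑ c, ((if (comp P Pj).avail x (eIq P Pj (Sum.inr ⟨i, c⟩)) then W (eIq P Pj (Sum.inr ⟨i, c⟩)) else 0)
          • (comp P Pj).input (eIq P Pj (Sum.inr ⟨i, c⟩))) (eDq P Pj (Sum.inl k)) = 0 :=
        Finset.sum_eq_zero fun i _ => Finset.sum_eq_zero fun c _ => by
          rw [smul_apply'', comp_input_inr_inl, mul_zero]
      rw [e1, e2, add_zero, comp_target_inl]
    | inr τ =>
      obtain ⟨i, k'⟩ := τ
      have e1 : ∑ i', ((if (comp P Pj).avail x (eIq P Pj (Sum.inl i')) then W (eIq P Pj (Sum.inl i')) else 0)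
          • (comp P Pj).input (eIq P Pj (Sum.inl i'))) (eDq P Pj (Sum.inr ⟨i, k'⟩))
          = -((if (Rprog Pj P i).eval x then w i else 0) * (Rprog Pj P i).target k') := by
        rw [Finset.sum_eq_single i]
        · rw [smul_apply'', if_pos (comp_avail_inl P Pj i), comp_input_inl_inr, hWl,
            ofLp_congr (Pi.single_eq_same (M := fun i' => EuclideanSpace ℂ (Fin ((Rprog Pj P i').d))) i (Rprog Pj P i).target) k']
          ring
        · intro i' _ hne
          rw [smul_apply'', comp_input_inl_inr,
            ofLp_congr (Pi.single_eq_of_ne (M := fun i'' => EuclideanSpace ℂ (Fin ((Rprog Pj P i'').d))) (Ne.symm hne) (Rprog Pj P i').target) k']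
          show _ * -(0:ℂ) = 0
          ring
        · intro h'; exact absurd (Finset.mem_univ i) h'
      have e2 : ∑ i', ∑ c, ((if (comp P Pj).avail x (eIq P Pj (Sum.inr ⟨i', c⟩)) then W (eIq P Pj (Sum.inr ⟨i', c⟩)) else 0)
          • (comp P Pj).input (eIq P Pj (Sum.inr ⟨i', c⟩))) (eDq P Pj (Sum.inr ⟨i, k'⟩))
          = (if (Rprog Pj P i).eval x then w i else 0) * (Rprog Pj P i).target k' := by
        rw [Finset.sum_eq_single i]
        · by_cases he : (Rprog Pj P i).eval x
          · have hspec := he.choose_spec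
            have hci : ∀ c, (if (Rprog Pj P i).avail x c then he.choose c else 0) * (Rprog Pj P i).input c k'
                = ((if (Rprog Pj P i).avail x c then he.choose c else 0) • (Rprog Pj P i).input c) k' :=
              fun c => rfl
            calc ∑ c, ((if (comp P Pj).avail x (eIq P Pj (Sum.inr ⟨i, c⟩)) then W (eIq P Pj (Sum.inr ⟨i, c⟩)) else 0)
                  • (comp P Pj).input (eIq P Pj (Sum.inr ⟨i, c⟩))) (eDq P Pj (Sum.inr ⟨i, k'⟩))
                = ∑ c, w i * ((if (Rprog Pj P i).avail x c then he.choose c else 0) * (Rprog Pj P i).input c k') := by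
                  refine Finset.sum_congr rfl fun c _ => ?_
                  rw [smul_apply'', comp_input_inr_inr, hWr,
                    ofLp_congr (Pi.single_eq_same (M := fun i' => EuclideanSpace ℂ (Fin ((Rprog Pj P i').d))) i ((Rprog Pj P i).input c)) k',
                    dif_pos he, if_congr (comp_avail_inr_iff P Pj ⟨i, c⟩) rfl rfl]
                  by_cases hc : (Rprog Pj P i).avail x c
                  · rw [if_pos hc, if_pos hc]; ring
                  · rw [if_neg hc, if_neg hc]; ring
              _ = w i * (Rprog Pj P i).target k' := by
                  rw [← Finset.mul_sum, Finset.sum_congr rfl fun c _ => hci c,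
                    ← Finset.sum_apply, ← WithLp.ofLp_sum, hspec]
              _ = (if (Rprog Pj P i).eval x then w i else 0) * (Rprog Pj P i).target k' := by
                  rw [if_pos he]
          · rw [if_neg he, zero_mul]
            refine Finset.sum_eq_zero fun c _ => ?_
            rw [smul_apply'', hWr, dif_neg he, ite_self, zero_mul]
        · intro i' _ hne
          refine Finset.sum_eq_zero fun c _ => ?_
          rw [smul_apply'', comp_input_inr_inr,
            ofLp_congr (Pi.single_eq_of_ne (M := fun i'' => EuclideanSpace ℂ (Fin ((Rprog Pj P i'').d))) (Ne.symm hne) ((Rprog Pj P i').input c)) k']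
          show _ * (0:ℂ) = 0
          ring
        · intro h'; exact absurd (Finset.mem_univ i) h'
      rw [e1, e2, comp_target_inr]
      ring

end SpanProgram
namespace SpanProgram

variable {n mvars : ℕ} (P : SpanProgram n) (Pj : Fin n → SpanProgram mvars) {x : Fin mvars → Bool}

open Classical in
lemma comp_trueWit (s : Fin mvars → ℝ) (w : Fin P.m → ℂ)
    (hw : ∑ i, (if (Rprog Pj P i).eval x then w i else 0) • P.input i = P.target)
    (γ : ∀ i, Fin ((Rprog Pj P i).m) → ℂ)
    (hγ : ∀ i, (Rprog Pj P i).eval x → (Rprog Pj P i).IsTrueWit x (γ i)) :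
    ∃ W, (comp P Pj).IsTrueWit x W ∧
      (comp P Pj).tCost s W
        = ∑ i, ‖(if (Rprog Pj P i).eval x then w i else 0)‖ ^ 2 * (Rprog Pj P i).tCost s (γ i) := by
  have hcoord : ∀ k, ∑ i, (if (Rprog Pj P i).eval x then w i else 0) * P.input i k
      = P.target k := by
    intro k
    have := ofLp_congr hw k
    rw [WithLp.ofLp_sum, Finset.sum_apply] at this
    exact this
  set W : Fin ((comp P Pj).m) → ℂ := fun a =>
    Sum.elim (fun i => if (Rprog Pj P i).eval x then w i else 0)
      (fun σ => (if (Rprog Pj P σ.1).eval x then w σ.1 else 0) * γ σ.1 σ.2)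
      ((eIq P Pj).symm a) with hWdef
  have hWl : ∀ i, W (eIq P Pj (Sum.inl i)) = if (Rprog Pj P i).eval x then w i else 0 := by
    intro i; rw [hWdef]; simp
  have hWr : ∀ σ : Σ i : Fin P.m, Fin ((Rprog Pj P i).m),
      W (eIq P Pj (Sum.inr σ)) = (if (Rprog Pj P σ.1).eval x then w σ.1 else 0) * γ σ.1 σ.2 := by
    intro σ; rw [hWdef]; simp
  refine ⟨W, ?_, ?_⟩
  · ext cc
    obtain ⟨u, rfl⟩ : ∃ u, eDq P Pj u = cc := ⟨(eDq P Pj).symm cc, Equiv.apply_symm_apply _ _⟩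
    rw [WithLp.ofLp_sum, Finset.sum_apply, sum_compm_split P Pj
      (fun a => ((if (comp P Pj).avail x a then W a else 0) • (comp P Pj).input a) (eDq P Pj u))]
    cases u with
    | inl k =>
      have e1 : ∑ i, ((if (comp P Pj).avail x (eIq P Pj (Sum.inl i)) then W (eIq P Pj (Sum.inl i)) else 0)
          • (comp P Pj).input (eIq P Pj (Sum.inl i))) (eDq P Pj (Sum.inl k)) = P.target k := by
        rw [← hcoord k]
        refine Finset.sum_congr rfl fun i _ => ?_
        rw [smul_apply'', if_pos (comp_avail_inl P Pj i), comp_input_inl_inl, hWl]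
      have e2 : ∑ i, ∑ c, ((if (comp P Pj).avail x (eIq P Pj (Sum.inr ⟨i, c⟩)) then W (eIq P Pj (Sum.inr ⟨i, c⟩)) else 0)
          • (comp P Pj).input (eIq P Pj (Sum.inr ⟨i, c⟩))) (eDq P Pj (Sum.inl k)) = 0 :=
        Finset.sum_eq_zero fun i _ => Finset.sum_eq_zero fun c _ => by
          rw [smul_apply'', comp_input_inr_inl, mul_zero]
      rw [e1, e2, add_zero, comp_target_inl]
    | inr τ =>
      obtain ⟨i, k'⟩ := τ
      have e1 : ∑ i', ((if (comp P Pj).avail x (eIq P Pj (Sum.inl i')) then W (eIq P Pj (Sum.inl i')) else 0)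
          • (comp P Pj).input (eIq P Pj (Sum.inl i'))) (eDq P Pj (Sum.inr ⟨i, k'⟩))
          = -((if (Rprog Pj P i).eval x then w i else 0) * (Rprog Pj P i).target k') := by
        rw [Finset.sum_eq_single i]
        · rw [smul_apply'', if_pos (comp_avail_inl P Pj i), comp_input_inl_inr, hWl,
            ofLp_congr (Pi.single_eq_same (M := fun i' => EuclideanSpace ℂ (Fin ((Rprog Pj P i').d))) i (Rprog Pj P i).target) k']
          ring
        · intro i' _ hne
          rw [smul_apply'', comp_input_inl_inr,
            ofLp_congr (Pi.single_eq_of_ne (M := fun i'' => EuclideanSpace ℂ (Fin ((Rprog Pj P i'').d))) (Ne.symm hne) (Rprog Pj P i').target) k']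
          show _ * -(0:ℂ) = 0
          ring
        · intro h'; exact absurd (Finset.mem_univ i) h'
      have e2 : ∑ i', ∑ c, ((if (comp P Pj).avail x (eIq P Pj (Sum.inr ⟨i', c⟩)) then W (eIq P Pj (Sum.inr ⟨i', c⟩)) else 0)
          • (comp P Pj).input (eIq P Pj (Sum.inr ⟨i', c⟩))) (eDq P Pj (Sum.inr ⟨i, k'⟩))
          = (if (Rprog Pj P i).eval x then w i else 0) * (Rprog Pj P i).target k' := by
        rw [Finset.sum_eq_single i]
        · have estep : ∀ c, ((if (comp P Pj).avail x (eIq P Pj (Sum.inr ⟨i, c⟩)) then W (eIq P Pj (Sum.inr ⟨i, c⟩)) else 0)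
              • (comp P Pj).input (eIq P Pj (Sum.inr ⟨i, c⟩))) (eDq P Pj (Sum.inr ⟨i, k'⟩))
              = (if (Rprog Pj P i).eval x then w i else 0) *
                (((if (Rprog Pj P i).avail x c then γ i c else 0) • (Rprog Pj P i).input c) k') := by
            intro c
            rw [smul_apply'', comp_input_inr_inr, hWr,
              ofLp_congr (Pi.single_eq_same (M := fun i' => EuclideanSpace ℂ (Fin ((Rprog Pj P i').d))) i ((Rprog Pj P i).input c)) k',
              if_congr (comp_avail_inr_iff P Pj ⟨i, c⟩) rfl rfl, smul_apply'']
            by_cases hc : (Rprog Pj P i).avail x c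
            · rw [if_pos hc, if_pos hc]; ring
            · rw [if_neg hc, if_neg hc]; ring
          rw [Finset.sum_congr rfl fun c _ => estep c, ← Finset.mul_sum, ← Finset.sum_apply, ← WithLp.ofLp_sum]
          by_cases he : (Rprog Pj P i).eval x
          · rw [hγ i he]
          · rw [if_neg he, zero_mul, zero_mul]
        · intro i' _ hne
          refine Finset.sum_eq_zero fun c _ => ?_
          rw [smul_apply'', comp_input_inr_inr,
            ofLp_congr (Pi.single_eq_of_ne (M := fun i'' => EuclideanSpace ℂ (Fin ((Rprog Pj P i'').d))) (Ne.symm hne) ((Rprog Pj P i').input c)) k']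
          show _ * (0:ℂ) = 0
          ring
        · intro h'; exact absurd (Finset.mem_univ i) h'
      rw [e1, e2, comp_target_inr]
      ring
  · rw [tCost, sum_compm_split P Pj (fun a => (comp P Pj).cw s a * ‖W a‖ ^ 2)]
    have e1 : ∑ i, (comp P Pj).cw s (eIq P Pj (Sum.inl i)) * ‖W (eIq P Pj (Sum.inl i))‖ ^ 2 = 0 :=
      Finset.sum_eq_zero fun i _ => by rw [comp_cw_inl, zero_mul]
    rw [e1, zero_add]
    refine Finset.sum_congr rfl fun i _ => ?_
    rw [tCost, Finset.mul_sum]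
    refine Finset.sum_congr rfl fun c _ => ?_
    rw [comp_cw_inr, hWr, norm_mul, mul_pow]
    ring

open Classical in
lemma comp_falseWit (s : Fin mvars → ℝ) (w' : EuclideanSpace ℂ (Fin P.d))
    (h1 : ⟪P.target, w'⟫ = 1)
    (h2 : ∀ i, (Rprog Pj P i).eval x → ⟪P.input i, w'⟫ = 0)
    (z : ∀ i, EuclideanSpace ℂ (Fin ((Rprog Pj P i).d)))
    (hz : ∀ i, ¬ (Rprog Pj P i).eval x → (Rprog Pj P i).IsFalseWit x (z i)) :
    ∃ Z, (comp P Pj).IsFalseWit x Z ∧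
      (comp P Pj).fCost s Z
        = ∑ i, ‖(if (Rprog Pj P i).eval x then 0 else ⟪P.input i, w'⟫)‖ ^ 2
            * (Rprog Pj P i).fCost s (z i) := by
  set ci : Fin P.m → ℂ := fun i => if (Rprog Pj P i).eval x then 0 else ⟪P.input i, w'⟫ with hci
  set Z : EuclideanSpace ℂ (Fin ((comp P Pj).d)) := WithLp.toLp 2 fun cc =>
    Sum.elim (fun k => w' k) (fun τ => ci τ.1 * z τ.1 τ.2) ((eDq P Pj).symm cc) with hZdef
  have hZl : ∀ k, Z (eDq P Pj (Sum.inl k)) = w' k := by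
    intro k; rw [hZdef]; simp
  have hZr : ∀ τ : Σ i : Fin P.m, Fin ((Rprog Pj P i).d),
      Z (eDq P Pj (Sum.inr τ)) = ci τ.1 * z τ.1 τ.2 := by
    intro τ; rw [hZdef]; simp
  have hinner : ∀ σ : Σ i : Fin P.m, Fin ((Rprog Pj P i).m),
      ⟪(comp P Pj).input (eIq P Pj (Sum.inr σ)), Z⟫ = ci σ.1 * ⟪(Rprog Pj P σ.1).input σ.2, z σ.1⟫ := by
    intro σ
    simp -proj only [PiLp.inner_apply, RCLike.inner_apply']
    rw [sum_compd_split P Pj (fun c => (starRingEnd ℂ) ((comp P Pj).input (eIq P Pj (Sum.inr σ)) c) * Z c)]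
    have e1 : ∑ k, (starRingEnd ℂ) ((comp P Pj).input (eIq P Pj (Sum.inr σ)) (eDq P Pj (Sum.inl k))) * Z (eDq P Pj (Sum.inl k)) = 0 :=
      Finset.sum_eq_zero fun k _ => by rw [comp_input_inr_inl, map_zero, zero_mul]
    have e2 : ∑ i, ∑ k', (starRingEnd ℂ) ((comp P Pj).input (eIq P Pj (Sum.inr σ)) (eDq P Pj (Sum.inr ⟨i, k'⟩))) * Z (eDq P Pj (Sum.inr ⟨i, k'⟩))
        = ci σ.1 * ∑ k', (starRingEnd ℂ) ((Rprog Pj P σ.1).input σ.2 k') * z σ.1 k' := by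
      rw [Finset.sum_eq_single σ.1]
      · rw [Finset.mul_sum]
        refine Finset.sum_congr rfl fun k' _ => ?_
        rw [comp_input_inr_inr, hZr,
          ofLp_congr (Pi.single_eq_same (M := fun i' => EuclideanSpace ℂ (Fin ((Rprog Pj P i').d))) σ.1 ((Rprog Pj P σ.1).input σ.2)) k']
        ring
      · intro i' _ hne
        refine Finset.sum_eq_zero fun k' _ => ?_
        rw [comp_input_inr_inr,
          ofLp_congr (Pi.single_eq_of_ne (M := fun i'' => EuclideanSpace ℂ (Fin ((Rprog Pj P i'').d))) hne ((Rprog Pj P σ.1).input σ.2)) k']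
        show (starRingEnd ℂ) (0:ℂ) * _ = 0
        rw [map_zero, zero_mul]
      · intro h'; exact absurd (Finset.mem_univ σ.1) h'
    rw [e1, e2, zero_add]
  refine ⟨Z, ⟨?_, ?_⟩, ?_⟩
  · simp -proj only [PiLp.inner_apply, RCLike.inner_apply']
    rw [sum_compd_split P Pj (fun c => (starRingEnd ℂ) ((comp P Pj).target c) * Z c)]
    have e1 : ∑ k, (starRingEnd ℂ) ((comp P Pj).target (eDq P Pj (Sum.inl k))) * Z (eDq P Pj (Sum.inl k)) = ⟪P.target, w'⟫ := by
      simp -proj only [PiLp.inner_apply, RCLike.inner_apply']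
      refine Finset.sum_congr rfl fun k _ => ?_
      rw [comp_target_inl, hZl]
    have e2 : ∑ i, ∑ k', (starRingEnd ℂ) ((comp P Pj).target (eDq P Pj (Sum.inr ⟨i, k'⟩))) * Z (eDq P Pj (Sum.inr ⟨i, k'⟩)) = 0 :=
      Finset.sum_eq_zero fun i _ => Finset.sum_eq_zero fun k' _ => by
        rw [comp_target_inr, map_zero, zero_mul]
    rw [e1, e2, add_zero, h1]
  · intro a ha
    obtain ⟨u, rfl⟩ : ∃ u, eIq P Pj u = a := ⟨(eIq P Pj).symm a, Equiv.apply_symm_apply _ _⟩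
    cases u with
    | inl i =>
      simp -proj only [PiLp.inner_apply, RCLike.inner_apply']
      rw [sum_compd_split P Pj (fun c => (starRingEnd ℂ) ((comp P Pj).input (eIq P Pj (Sum.inl i)) c) * Z c)]
      have e1 : ∑ k, (starRingEnd ℂ) ((comp P Pj).input (eIq P Pj (Sum.inl i)) (eDq P Pj (Sum.inl k))) * Z (eDq P Pj (Sum.inl k)) = ⟪P.input i, w'⟫ := by
        simp -proj only [PiLp.inner_apply, RCLike.inner_apply']
        refine Finset.sum_congr rfl fun k _ => ?_
        rw [comp_input_inl_inl, hZl]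
      have e2 : ∑ i', ∑ k', (starRingEnd ℂ) ((comp P Pj).input (eIq P Pj (Sum.inl i)) (eDq P Pj (Sum.inr ⟨i', k'⟩))) * Z (eDq P Pj (Sum.inr ⟨i', k'⟩))
          = -(ci i * ⟪(Rprog Pj P i).target, z i⟫) := by
        rw [Finset.sum_eq_single i]
        · rw [PiLp.inner_apply, Finset.mul_sum, ← Finset.sum_neg_distrib]
          refine Finset.sum_congr rfl fun k' _ => ?_
          rw [comp_input_inl_inr, hZr,
            ofLp_congr (Pi.single_eq_same (M := fun i' => EuclideanSpace ℂ (Fin ((Rprog Pj P i').d))) i (Rprog Pj P i).target) k',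
            map_neg]
          show _ = -(ci i * (z i k' * (starRingEnd ℂ) ((Rprog Pj P i).target k')))
          ring
        · intro i' _ hne
          refine Finset.sum_eq_zero fun k' _ => ?_
          rw [comp_input_inl_inr,
            ofLp_congr (Pi.single_eq_of_ne (M := fun i'' => EuclideanSpace ℂ (Fin ((Rprog Pj P i'').d))) hne (Rprog Pj P i).target) k']
          show (starRingEnd ℂ) (-(0:ℂ)) * _ = 0
          rw [neg_zero, map_zero, zero_mul]
        · intro h'; exact absurd (Finset.mem_univ i) h'
      rw [e1, e2]
      by_cases he : (Rprog Pj P i).eval x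
      · rw [h2 i he, hci]
        simp [he]
      · rw [hci]
        simp only [if_neg he]
        rw [(hz i he).1, mul_one, add_neg_cancel]
    | inr σ =>
      rw [hinner σ]
      by_cases he : (Rprog Pj P σ.1).eval x
      · rw [hci]; simp [he]
      · rw [(hz σ.1 he).2 σ.2 ((comp_avail_inr_iff P Pj σ).mp ha), mul_zero]
  · rw [fCost, sum_compm_split P Pj (fun a => (comp P Pj).cw s a * ‖⟪(comp P Pj).input a, Z⟫‖ ^ 2)]
    have e1 : ∑ i, (comp P Pj).cw s (eIq P Pj (Sum.inl i)) * ‖⟪(comp P Pj).input (eIq P Pj (Sum.inl i)), Z⟫‖ ^ 2 = 0 :=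
      Finset.sum_eq_zero fun i _ => by rw [comp_cw_inl, zero_mul]
    rw [e1, zero_add]
    refine Finset.sum_congr rfl fun i _ => ?_
    rw [fCost, Finset.mul_sum]
    refine Finset.sum_congr rfl fun c _ => ?_
    rw [comp_cw_inr, hinner ⟨i, c⟩, norm_mul, mul_pow]
    ring

end SpanProgram
namespace SpanProgram

variable {n mvars : ℕ} (P : SpanProgram n) (Pj : Fin n → SpanProgram mvars) {x : Fin mvars → Bool}

lemma tCost_m_zero {Q : SpanProgram mvars} (hm : Q.m = 0) (s : Fin mvars → ℝ)
    (γ : Fin Q.m → ℂ) : Q.tCost s γ = 0 := by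
  haveI : IsEmpty (Fin Q.m) := hm ▸ inferInstanceAs (IsEmpty (Fin 0))
  rw [tCost, Finset.univ_eq_empty, Finset.sum_empty]

lemma Rprog_m_none {i : Fin P.m} (hl : P.label i = none) : (Rprog Pj P i).m = 0 := by
  rw [Rprog_none P Pj hl]; rfl

open Classical in
lemma comp_eval_iff {fj : Fin n → (Fin mvars → Bool) → Bool}
    (hPj : ∀ j x, (Pj j).eval x ↔ fj j x = true) :
    (comp P Pj).eval x ↔ P.eval (fun j => fj j x) := by
  rw [comp_eval_aux]
  refine exists_congr fun w => ?_
  have hsum : (∑ i, (if (Rprog Pj P i).eval x then w i else 0) • P.input i)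
      = ∑ i, (if P.avail (fun j => fj j x) i then w i else 0) • P.input i :=
    Finset.sum_congr rfl fun i _ => by
      rw [if_congr (Rprog_eval_iff P Pj hPj i) rfl rfl]
  rw [hsum]

open Classical in
lemma comp_wsizex_le {s : Fin mvars → ℝ} (hs : ∀ k, 0 ≤ s k)
    {fj : Fin n → (Fin mvars → Bool) → Bool}
    (hPj : ∀ j x, (Pj j).eval x ↔ fj j x = true) (x : Fin mvars → Bool) :
    (comp P Pj).wsizex s x
      ≤ P.wsizex (fun j => (Pj j).wsizeD s Set.univ) (fun j => fj j x) := by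
  set r : Fin n → ℝ := fun j => (Pj j).wsizeD s Set.univ with hrdef
  have hr0 : ∀ j, 0 ≤ r j := fun j => (Pj j).wsizeD_nonneg hs
  set y : Fin n → Bool := fun j => fj j x with hydef
  have heval : (comp P Pj).eval x ↔ P.eval y := comp_eval_iff P Pj hPj
  refine le_of_forall_pos_le_add fun ε hε => ?_
  by_cases h : P.eval y
  · obtain ⟨w, hw, hwc⟩ := P.exists_trueWit_cost_lt hr0 h (half_pos hε)
    have hw' : ∑ i, (if (Rprog Pj P i).eval x then w i else 0) • P.input i = P.target := by
      rw [Finset.sum_congr rfl fun i _ => by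
        rw [if_congr (Rprog_eval_iff P Pj hPj i) rfl rfl]]
      exact hw
    set B : ℝ := ∑ i, ‖w i‖ ^ 2 with hBdef
    have hB0 : 0 ≤ B := Finset.sum_nonneg fun i _ => sq_nonneg _
    set δ : ℝ := (ε / 2) / (B + 1) with hδdef
    have hδ : 0 < δ := by positivity
    have hch : ∀ i, ∃ γ : Fin ((Rprog Pj P i).m) → ℂ,
        ((Rprog Pj P i).eval x → (Rprog Pj P i).IsTrueWit x γ) ∧
        ‖(if (Rprog Pj P i).eval x then w i else 0)‖ ^ 2 * (Rprog Pj P i).tCost s γ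
          ≤ P.cw r i * ‖w i‖ ^ 2 + δ * ‖w i‖ ^ 2 := by
      intro i
      by_cases he : (Rprog Pj P i).eval x
      · rcases hl : P.label i with - | ⟨j, b⟩
        · refine ⟨he.choose, fun _ => he.choose_spec, ?_⟩
          rw [tCost_m_zero (Rprog_m_none P Pj hl) s, mul_zero, cw_of_none hl, zero_mul,
            zero_add]
          positivity
        · obtain ⟨γ, hγ, hγc⟩ := Rprog_trueWit_approx P Pj hs hl he hδ
          refine ⟨γ, fun _ => hγ, ?_⟩
          rw [if_pos he, cw_of_some hl]
          have h1 : (Rprog Pj P i).tCost s γ ≤ r j + δ := by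
            refine le_trans hγc.le (add_le_add ?_ le_rfl)
            exact (Pj j).wsizex_le_wsizeD s x
          calc ‖w i‖ ^ 2 * (Rprog Pj P i).tCost s γ ≤ ‖w i‖ ^ 2 * (r j + δ) := by
                refine mul_le_mul_of_nonneg_left h1 (sq_nonneg _)
            _ = r j * ‖w i‖ ^ 2 + δ * ‖w i‖ ^ 2 := by ring
      · refine ⟨fun _ => 0, fun h' => absurd h' he, ?_⟩
        rw [if_neg he, norm_zero]
        have : (0:ℝ) ≤ P.cw r i * ‖w i‖ ^ 2 + δ * ‖w i‖ ^ 2 := by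
          have := P.cw_nonneg hr0 i
          positivity
        calc (0:ℝ) ^ 2 * (Rprog Pj P i).tCost s (fun _ => 0) = 0 := by ring
          _ ≤ _ := this
    choose γ hγ1 hγ2 using hch
    obtain ⟨W, hWt, hWc⟩ := comp_trueWit P Pj s w hw' γ hγ1
    have hδB : δ * B ≤ ε / 2 := by
      rw [hδdef, div_mul_eq_mul_div, div_le_iff₀ (by positivity)]
      nlinarith
    calc (comp P Pj).wsizex s x ≤ (comp P Pj).tCost s W := (comp P Pj).wsizex_le_tCost hs hWt
      _ = ∑ i, ‖(if (Rprog Pj P i).eval x then w i else 0)‖ ^ 2 * (Rprog Pj P i).tCost s (γ i) := hWc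
      _ ≤ ∑ i, (P.cw r i * ‖w i‖ ^ 2 + δ * ‖w i‖ ^ 2) := Finset.sum_le_sum fun i _ => hγ2 i
      _ = P.tCost r w + δ * B := by
          rw [Finset.sum_add_distrib, ← Finset.mul_sum, tCost, hBdef]
      _ ≤ (P.wsizex r y + ε / 2) + ε / 2 := add_le_add hwc.le hδB
      _ = P.wsizex r y + ε := by ring
  · have hne : ¬ (comp P Pj).eval x := fun hc => h (heval.mp hc)
    obtain ⟨w', hw', hwc⟩ := P.exists_falseWit_cost_lt hr0 h (half_pos hε)
    have horth : ∀ i, (Rprog Pj P i).eval x → ⟪P.input i, w'⟫ = 0 := fun i he =>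
      hw'.2 i ((Rprog_eval_iff P Pj hPj i).mp he)
    set B : ℝ := ∑ i, ‖⟪P.input i, w'⟫‖ ^ 2 with hBdef
    have hB0 : 0 ≤ B := Finset.sum_nonneg fun i _ => sq_nonneg _
    set δ : ℝ := (ε / 2) / (B + 1) with hδdef
    have hδ : 0 < δ := by positivity
    have hch : ∀ i, ∃ z : EuclideanSpace ℂ (Fin ((Rprog Pj P i).d)),
        (¬ (Rprog Pj P i).eval x → (Rprog Pj P i).IsFalseWit x z) ∧
        ‖(if (Rprog Pj P i).eval x then 0 else ⟪P.input i, w'⟫)‖ ^ 2 * (Rprog Pj P i).fCost s z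
          ≤ P.cw r i * ‖⟪P.input i, w'⟫‖ ^ 2 + δ * ‖⟪P.input i, w'⟫‖ ^ 2 := by
      intro i
      by_cases he : (Rprog Pj P i).eval x
      · refine ⟨0, fun h' => absurd he h', ?_⟩
        rw [if_pos he, norm_zero]
        have : (0:ℝ) ≤ P.cw r i * ‖⟪P.input i, w'⟫‖ ^ 2 + δ * ‖⟪P.input i, w'⟫‖ ^ 2 := by
          have := P.cw_nonneg hr0 i
          positivity
        calc (0:ℝ) ^ 2 * (Rprog Pj P i).fCost s 0 = 0 := by ring
          _ ≤ _ := this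
      · rcases hl : P.label i with - | ⟨j, b⟩
        · exact absurd ((Rprog_none P Pj hl) ▸ trivTrue_eval x) he
        · obtain ⟨z, hz, hzc⟩ := Rprog_falseWit_approx P Pj hs hl he hδ
          refine ⟨z, fun _ => hz, ?_⟩
          rw [if_neg he, cw_of_some hl]
          have h1 : (Rprog Pj P i).fCost s z ≤ r j + δ := by
            refine le_trans hzc.le (add_le_add ?_ le_rfl)
            exact (Pj j).wsizex_le_wsizeD s x
          calc ‖⟪P.input i, w'⟫‖ ^ 2 * (Rprog Pj P i).fCost s z
              ≤ ‖⟪P.input i, w'⟫‖ ^ 2 * (r j + δ) :=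
                mul_le_mul_of_nonneg_left h1 (sq_nonneg _)
            _ = r j * ‖⟪P.input i, w'⟫‖ ^ 2 + δ * ‖⟪P.input i, w'⟫‖ ^ 2 := by ring
    choose z hz1 hz2 using hch
    obtain ⟨Z, hZf, hZc⟩ := comp_falseWit P Pj s w' hw'.1 horth z hz1
    have hδB : δ * B ≤ ε / 2 := by
      rw [hδdef, div_mul_eq_mul_div, div_le_iff₀ (by positivity)]
      nlinarith
    calc (comp P Pj).wsizex s x ≤ (comp P Pj).fCost s Z := (comp P Pj).wsizex_le_fCost hs hne hZf
      _ = ∑ i, ‖(if (Rprog Pj P i).eval x then 0 else ⟪P.input i, w'⟫)‖ ^ 2 * (Rprog Pj P i).fCost s (z i) := hZc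
      _ ≤ ∑ i, (P.cw r i * ‖⟪P.input i, w'⟫‖ ^ 2 + δ * ‖⟪P.input i, w'⟫‖ ^ 2) :=
          Finset.sum_le_sum fun i _ => hz2 i
      _ = P.fCost r w' + δ * B := by
          rw [Finset.sum_add_distrib, ← Finset.mul_sum, fCost, hBdef]
      _ ≤ (P.wsizex r y + ε / 2) + ε / 2 := add_le_add hwc.le hδB
      _ = P.wsizex r y + ε := by ring

end SpanProgram

end

/-- span program composition.  If `P` computes `f` and `P_j` computes `f_j`
(`j ∈ [n]`, all on the same `m` input bits), then there is a span program `Q` computing the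
composition `g(x) = f(f_1(x), …, f_n(x))` with, for every cost vector `s`,
`wsize_s(Q) ≤ wsize_r(P)` where `r_j = wsize_s(P_j)`; in particular
`wsize_s(Q) ≤ wsize(P) · max_j wsize_s(P_j)`. -/
theorem spanProgram_composition (n mvars : ℕ)
    (f : (Fin n → Bool) → Bool) (fj : Fin n → (Fin mvars → Bool) → Bool)
    (g : (Fin mvars → Bool) → Bool)
    (hg : ∀ x, g x = f (fun j => fj j x))
    (P : SpanProgram n) (hP : ∀ y, P.eval y ↔ f y = true)
    (Pj : Fin n → SpanProgram mvars) (hPj : ∀ j x, (Pj j).eval x ↔ fj j x = true) :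
    ∃ Q : SpanProgram mvars,
      (∀ x, Q.eval x ↔ g x = true) ∧
      ∀ s : Fin mvars → ℝ, (∀ k, 0 ≤ s k) →
        Q.wsizeD s Set.univ
            ≤ P.wsizeD (fun j => (Pj j).wsizeD s Set.univ) Set.univ ∧
        Q.wsizeD s Set.univ
            ≤ P.wsizeD (fun _ => 1) Set.univ * ⨆ j : Fin n, (Pj j).wsizeD s Set.univ := by
  refine ⟨SpanProgram.comp P Pj, ?_, ?_⟩
  · intro x
    rw [SpanProgram.comp_eval_iff P Pj hPj, hP, hg]
  · intro s hs
    set r : Fin n → ℝ := fun j => (Pj j).wsizeD s Set.univ with hrdef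
    have hr0 : ∀ j, 0 ≤ r j := fun j => (Pj j).wsizeD_nonneg hs
    have hPr0 : 0 ≤ P.wsizeD r Set.univ := P.wsizeD_nonneg hr0
    have hfirst : (SpanProgram.comp P Pj).wsizeD s Set.univ ≤ P.wsizeD r Set.univ := by
      refine SpanProgram.wsizeD_le _ s hPr0 fun x => ?_
      exact le_trans (SpanProgram.comp_wsizex_le P Pj hs hPj x)
        (P.wsizex_le_wsizeD r _)
    refine ⟨hfirst, ?_⟩
    set M : ℝ := ⨆ j : Fin n, (Pj j).wsizeD s Set.univ with hMdef
    have hrM : ∀ j, r j ≤ M := fun j =>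
      le_ciSup (Set.Finite.bddAbove (Set.finite_range _)) j
    have hM0 : 0 ≤ M := Real.iSup_nonneg fun j => hr0 j
    have h1nonneg : 0 ≤ P.wsizeD (fun _ => 1) Set.univ :=
      P.wsizeD_nonneg fun _ => zero_le_one
    refine le_trans hfirst ?_
    refine SpanProgram.wsizeD_le _ r (mul_nonneg h1nonneg hM0) fun y => ?_
    calc P.wsizex r y ≤ M * P.wsizex (fun _ => 1) y :=
          SpanProgram.wsizex_le_mul hM0 hr0 hrM y
      _ ≤ M * P.wsizeD (fun _ => 1) Set.univ :=
          mul_le_mul_of_nonneg_left (P.wsizex_le_wsizeD _ y) hM0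
      _ = P.wsizeD (fun _ => 1) Set.univ * M := mul_comm _ _
end

section
/- Let P be a span program on n boolean variables with data (V, t, A, Π(·)) as below, and for x ∈ {0,1}^n let A_{G_P(x)} be the self-adjoint operator on (V ⊕ ℂ^I) ⊕ (ℂ ⊕ ℂ^I) given by A_{G_P(x)}((ψ_V, ψ_I), (ψ_0, φ_I)) = ((ψ_0 t + A φ_I, (1 − Π(x)) φ_I), (⟨t, ψ_V⟩, A† ψ_V + (1 − Π(x)) ψ_I)), and let e_0 denote the unit vector on the ℂ coordinate (the output vertex). Then: (i) if f_P(x) = 1 and w ∈ ℂ^I is a witness (A Π(x) w = t), then A_{G_P(x)} has an eigenvalue-zero eigenvector ψ with |⟨e_0, ψ⟩|² / ‖ψ‖² ≥ 1 / (1 + ‖w‖²); (ii) if f_P(x) = 0 and w' ∈ V is a witness (⟨t, w'⟩ = 1 and Π(x) A† w' = 0), then for any orthonormal basis (α) of eigenvectors of A_{G_P(x)} with eigenvalues ρ(α) and any Υ ≥ 0, ∑_{α : |ρ(α)| ≤ Υ} |⟨α, e_0⟩|² ≤ 8 Υ² (‖w'‖² + ‖A† w'‖²). -/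
open scoped ComplexInnerProductSpace

open Matrix

namespace SpanProgram

variable {n : ℕ}

/-- The vertex set of the graph `G_P(x)`:  `(V ⊕ ℂ^I) ⊕ (ℂ ⊕ ℂ^I)`. -/
abbrev vtx (P : SpanProgram n) : Type := (Fin P.d ⊕ Fin P.m) ⊕ (Unit ⊕ Fin P.m)

/-- The biadjacency matrix `[[t, A], [0, 1 − Π(x)]]` of the graph `G_P(x)`. -/
noncomputable def biadj (P : SpanProgram n) (x : Fin n → Bool) :
    Matrix (Fin P.d ⊕ Fin P.m) (Unit ⊕ Fin P.m) ℂ :=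
  Matrix.fromBlocks
    (Matrix.of fun k (_ : Unit) => P.target k)
    (Matrix.of fun k i => P.input i k)
    0
    (Matrix.of fun i i' => if i = i' ∧ ¬ P.avail x i then 1 else 0)

/-- The weighted adjacency matrix `A_{G_P(x)}` of the span-program graph. -/
noncomputable def adjMat (P : SpanProgram n) (x : Fin n → Bool) :
    Matrix P.vtx P.vtx ℂ :=
  Matrix.fromBlocks 0 (P.biadj x) (P.biadj x)ᴴ 0

/-- The unit vector on the output vertex `μ₀`. -/
noncomputable def outVec (P : SpanProgram n) : EuclideanSpace ℂ P.vtx :=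
  EuclideanSpace.single (Sum.inr (Sum.inl ())) 1

end SpanProgram

section Aux

open scoped ComplexConjugate

lemma eucl_norm_sq {ι : Type*} [Fintype ι] (v : EuclideanSpace ℂ ι) :
    ‖v‖ ^ 2 = ∑ i, ‖v i‖ ^ 2 := by
  rw [EuclideanSpace.norm_eq, Real.sq_sqrt (Finset.sum_nonneg fun i _ => sq_nonneg _)]

lemma my_parseval {ι : Type*} [Fintype ι] {E : Type*} [NormedAddCommGroup E]
    [InnerProductSpace ℂ E] (b : OrthonormalBasis ι ℂ E) (ψ : E) :
    ∑ α, ‖⟪b α, ψ⟫‖ ^ 2 = ‖ψ‖ ^ 2 := by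
  have h1 : ‖ψ‖ = ‖b.repr ψ‖ := (b.repr.norm_map ψ).symm
  rw [h1, eucl_norm_sq]
  exact Finset.sum_congr rfl fun α _ => by rw [b.repr_apply_apply]

end Aux

set_option maxHeartbeats 1000000

/-- spectral analysis of the span-program graph, non-black-box version.
(i) If `f_P(x) = 1` with witness `w` (i.e. `A Π(x) w = t`), then `A_{G_P(x)}` has an
eigenvalue-zero eigenvector whose squared relative overlap on the output vertex is at least
`1/(1 + ‖w‖²)`.  (ii) If `f_P(x) = 0` with witness `w'` (i.e. `⟪t, w'⟫ = 1` and
`Π(x) A† w' = 0`), then for any orthonormal eigenbasis of `A_{G_P(x)}` with eigenvalues `ρ α`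
and any `Υ ≥ 0`, the squared overlap of the output vertex on eigenvectors with `|ρ α| ≤ Υ` is
at most `8Υ²(‖w'‖² + ‖A† w'‖²)`. -/

theorem spanProgram_graph_spectral_analysis (n : ℕ) (P : SpanProgram n) (x : Fin n → Bool) :
    -- (i)
    (P.eval x →
      ∀ w : Fin P.m → ℂ,
        (∑ i, (if P.avail x i then w i else 0) • P.input i = P.target) →
        ∃ ψ : EuclideanSpace ℂ P.vtx,
          Matrix.toEuclideanLin (P.adjMat x) ψ = 0 ∧
          1 / (1 + ∑ i, ‖w i‖ ^ 2) ≤ ‖⟪P.outVec, ψ⟫‖ ^ 2 / ‖ψ‖ ^ 2) ∧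
    -- (ii)
    (¬ P.eval x →
      ∀ w' : EuclideanSpace ℂ (Fin P.d),
        ⟪P.target, w'⟫ = 1 →
        (∀ i, P.avail x i → ⟪P.input i, w'⟫ = 0) →
        ∀ (ι : Type) [Fintype ι] (b : OrthonormalBasis ι ℂ (EuclideanSpace ℂ P.vtx))
          (ρ : ι → ℝ),
          (∀ α, Matrix.toEuclideanLin (P.adjMat x) (b α) = (ρ α : ℂ) • b α) →
          ∀ Υ : ℝ, 0 ≤ Υ →
            ∑ α, (if |ρ α| ≤ Υ then ‖⟪b α, P.outVec⟫‖ ^ 2 else 0)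
              ≤ 8 * Υ ^ 2 * (‖w'‖ ^ 2 + ∑ i, ‖⟪P.input i, w'⟫‖ ^ 2)) := by
  
  constructor
  · -- Part (i)
    intro _ w hw
    classical
    set ψ : EuclideanSpace ℂ P.vtx := WithLp.toLp 2
      (Sum.elim (fun _ => 0) (Sum.elim (fun _ => (1 : ℂ))
        (fun i => if P.avail x i then -(w i) else 0)) : P.vtx → ℂ) with hψdef
    refine ⟨ψ, ?_, ?_⟩
    · -- zero eigenvector
      ext v
      show (∑ u, P.adjMat x v u * ψ u) = 0
      rcases v with (k | i) | (u | i)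
      · -- V rows
        have hk : ∑ i, (if P.avail x i then w i else 0) * P.input i k = P.target k := by
          have h := congrArg (fun f : EuclideanSpace ℂ (Fin P.d) => f k) hw
          rw [show ((∑ i, (if P.avail x i then w i else 0) • P.input i : EuclideanSpace ℂ (Fin P.d)) k)
              = ∑ i, ((if P.avail x i then w i else 0) • P.input i) k from
            by rw [WithLp.ofLp_sum, Finset.sum_apply]] at h
          simpa only [PiLp.smul_apply, smul_eq_mul] using h
        simp only [Fintype.sum_sum_type, SpanProgram.adjMat, Matrix.fromBlocks_apply₁₁,
          Matrix.fromBlocks_apply₁₂, Matrix.zero_apply, zero_mul, Finset.sum_const_zero,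
          Sum.elim_inl, Sum.elim_inr, mul_zero, zero_add, SpanProgram.biadj, Matrix.of_apply,
          Fintype.sum_unique, mul_one]
        simp only [hψdef, Sum.elim_inl, Sum.elim_inr, mul_one]
        rw [show ∑ i, P.input i k * (if P.avail x i then -(w i) else 0)
            = -∑ i, (if P.avail x i then w i else 0) * P.input i k by
          rw [← Finset.sum_neg_distrib]
          exact Finset.sum_congr rfl fun i _ => by split <;> ring]
        rw [hk]; ring
      · -- I rows (left block)
        simp only [Fintype.sum_sum_type, Fintype.sum_unique, SpanProgram.adjMat,
          SpanProgram.biadj, Matrix.fromBlocks_apply₁₁, Matrix.fromBlocks_apply₁₂,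
          Matrix.fromBlocks_apply₂₁, Matrix.fromBlocks_apply₂₂, Matrix.zero_apply, zero_mul,
          Finset.sum_const_zero, Matrix.of_apply, hψdef, Sum.elim_inl, Sum.elim_inr,
          mul_zero, zero_add, mul_one]
        refine Finset.sum_eq_zero fun i' _ => ?_
        by_cases h : i = i' ∧ ¬ P.avail x i
        · rcases h with ⟨rfl, hna⟩; simp [hna]
        · simp [h]
      · -- output row
        simp [Fintype.sum_sum_type, SpanProgram.adjMat, hψdef]
      · -- right I rows
        simp [Fintype.sum_sum_type, SpanProgram.adjMat, hψdef]
    · -- overlap bound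
      have hip : ⟪P.outVec, ψ⟫ = 1 := by
        rw [SpanProgram.outVec, EuclideanSpace.inner_single_left]
        simp [hψdef]
      have hterm : ∀ i, ‖(if P.avail x i then -(w i) else 0 : ℂ)‖ ^ 2 ≤ ‖w i‖ ^ 2 := by
        intro i
        split
        · simp
        · simpa using sq_nonneg ‖w i‖
      have hns : ‖ψ‖ ^ 2 ≤ 1 + ∑ i, ‖w i‖ ^ 2 := by
        rw [eucl_norm_sq]
        simp only [Fintype.sum_sum_type]
        simp only [hψdef, Sum.elim_inl, Sum.elim_inr, norm_zero, ne_eq, OfNat.ofNat_ne_zero,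
          not_false_eq_true, zero_pow, Finset.sum_const_zero, Fintype.sum_unique, norm_one,
          one_pow, zero_add]
        have := Finset.sum_le_sum (fun i (_ : i ∈ Finset.univ) => hterm i)
        linarith
      have hpos : (0 : ℝ) < ‖ψ‖ ^ 2 := by
        have hne : ψ ≠ 0 := by
          intro h
          have := congrArg (fun f : EuclideanSpace ℂ P.vtx => f (Sum.inr (Sum.inl ()))) h
          simp [hψdef] at this
        exact pow_pos (norm_pos_iff.mpr hne) 2
      rw [hip]
      simp only [norm_one, one_pow]
      exact one_div_le_one_div_of_le hpos hns
  · -- Part (ii)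
    intro _ w' hw1 hw2 ι _ b ρ hb Υ hΥ
    classical
    set Ψ : EuclideanSpace ℂ P.vtx := WithLp.toLp 2
      (Sum.elim (Sum.elim (fun k => w' k)
          (fun i => if P.avail x i then 0 else -⟪P.input i, w'⟫))
        (fun _ => 0) : P.vtx → ℂ) with hΨdef
    have hMΨ : Matrix.toEuclideanLin (P.adjMat x) Ψ = P.outVec := by
      ext v
      show (∑ u, P.adjMat x v u * Ψ u) = P.outVec v
      rcases v with (k | i) | (u | i)
      · simp [Fintype.sum_sum_type, SpanProgram.adjMat, SpanProgram.outVec,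
          EuclideanSpace.single_apply, hΨdef]
      · simp [Fintype.sum_sum_type, SpanProgram.adjMat, SpanProgram.outVec,
          EuclideanSpace.single_apply, hΨdef]
      · -- output row: equals ⟪target, w'⟫ = 1
        simp only [Fintype.sum_sum_type, SpanProgram.adjMat, Matrix.fromBlocks_apply₂₁,
          Matrix.fromBlocks_apply₂₂, Matrix.conjTranspose_apply, SpanProgram.biadj,
          Matrix.fromBlocks_apply₁₁, Matrix.fromBlocks_apply₂₁, Matrix.of_apply,
          Sum.elim_inl, Sum.elim_inr, hΨdef, Matrix.zero_apply, mul_zero, zero_mul,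
          Finset.sum_const_zero, add_zero, star_zero]
        have : ∑ k, star (P.target k) * w' k = ⟪P.target, w'⟫ := by
          rw [PiLp.inner_apply]
          exact Finset.sum_congr rfl fun k _ => by rw [RCLike.inner_apply, starRingEnd_apply]; ring
        rw [this, hw1]
        simp [SpanProgram.outVec, EuclideanSpace.single_apply]
      · -- input-coordinate rows
        simp only [Fintype.sum_sum_type, SpanProgram.adjMat, Matrix.fromBlocks_apply₂₁,
          Matrix.fromBlocks_apply₂₂, Matrix.conjTranspose_apply, SpanProgram.biadj,
          Matrix.fromBlocks_apply₁₂, Matrix.fromBlocks_apply₂₂, Matrix.of_apply,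
          Sum.elim_inl, Sum.elim_inr, hΨdef, Matrix.zero_apply, mul_zero, zero_mul,
          Finset.sum_const_zero, add_zero]
        have h1 : ∑ k, star (P.input i k) * w' k = ⟪P.input i, w'⟫ := by
          rw [PiLp.inner_apply]
          exact Finset.sum_congr rfl fun k _ => by rw [RCLike.inner_apply, starRingEnd_apply]; ring
        have h2 : ∑ i', star (if i' = i ∧ ¬ P.avail x i' then (1:ℂ) else 0) *
            (if P.avail x i' then 0 else -⟪P.input i', w'⟫)
            = if P.avail x i then 0 else -⟪P.input i, w'⟫ := by
          rw [Finset.sum_eq_single i]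
          · by_cases h : P.avail x i <;> simp [h]
          · intro i' _ hne
            by_cases h : P.avail x i' <;> simp [h, hne]
          · simp
        rw [h1, h2]
        by_cases h : P.avail x i
        · simp [h, hw2 i h, SpanProgram.outVec, EuclideanSpace.single_apply]
        · simp [h, SpanProgram.outVec, EuclideanSpace.single_apply]
    -- self-adjointness
    have hherm : (P.adjMat x)ᴴ = P.adjMat x := by
      rw [SpanProgram.adjMat, Matrix.fromBlocks_conjTranspose]
      simp
    have hadj : LinearMap.adjoint (Matrix.toEuclideanLin (P.adjMat x))
        = Matrix.toEuclideanLin (P.adjMat x) := by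
      rw [← Matrix.toEuclideanLin_conjTranspose_eq_adjoint, hherm]
    have hsa : ∀ y z : EuclideanSpace ℂ P.vtx,
        ⟪Matrix.toEuclideanLin (P.adjMat x) y, z⟫ = ⟪y, Matrix.toEuclideanLin (P.adjMat x) z⟫ := by
      intro y z
      rw [← hadj, LinearMap.adjoint_inner_left, hadj]
    -- key pointwise bound
    have key : ∀ α, (if |ρ α| ≤ Υ then ‖⟪b α, P.outVec⟫‖ ^ 2 else 0)
        ≤ Υ ^ 2 * ‖⟪b α, Ψ⟫‖ ^ 2 := by
      intro α
      split
      case isTrue h =>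
        have h1 : ⟪b α, P.outVec⟫ = (ρ α : ℂ) * ⟪b α, Ψ⟫ := by
          rw [← hMΨ, ← hsa, hb α, inner_smul_left]
          simp
        rw [h1, norm_mul, mul_pow]
        refine mul_le_mul_of_nonneg_right ?_ (sq_nonneg _)
        rw [Complex.norm_real, Real.norm_eq_abs]
        have := abs_nonneg (ρ α)
        nlinarith
      case isFalse h => positivity
    calc ∑ α, (if |ρ α| ≤ Υ then ‖⟪b α, P.outVec⟫‖ ^ 2 else 0)
        ≤ ∑ α, Υ ^ 2 * ‖⟪b α, Ψ⟫‖ ^ 2 := Finset.sum_le_sum fun α _ => key α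
      _ = Υ ^ 2 * ‖Ψ‖ ^ 2 := by rw [← Finset.mul_sum, my_parseval]
      _ ≤ Υ ^ 2 * (‖w'‖ ^ 2 + ∑ i, ‖⟪P.input i, w'⟫‖ ^ 2) := by
          refine mul_le_mul_of_nonneg_left ?_ (sq_nonneg Υ)
          rw [eucl_norm_sq Ψ]
          simp only [Fintype.sum_sum_type]
          simp only [hΨdef, Sum.elim_inl, Sum.elim_inr, norm_zero, ne_eq, OfNat.ofNat_ne_zero,
            not_false_eq_true, zero_pow, Finset.sum_const_zero, add_zero, Fintype.sum_unique]
          rw [eucl_norm_sq w']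
          have hterm2 : ∀ i, ‖(if P.avail x i then 0 else -⟪P.input i, w'⟫ : ℂ)‖ ^ 2
              ≤ ‖⟪P.input i, w'⟫‖ ^ 2 := by
            intro i
            split
            · simpa using sq_nonneg ‖⟪P.input i, w'⟫‖
            · simp
          have := Finset.sum_le_sum (fun i (_ : i ∈ Finset.univ) => hterm2 i)
          linarith
      _ ≤ 8 * Υ ^ 2 * (‖w'‖ ^ 2 + ∑ i, ‖⟪P.input i, w'⟫‖ ^ 2) := by
          have h0 : (0:ℝ) ≤ ‖w'‖ ^ 2 + ∑ i, ‖⟪P.input i, w'⟫‖ ^ 2 := by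
            have : (0:ℝ) ≤ ∑ i, ‖⟪P.input i, w'⟫‖ ^ 2 :=
              Finset.sum_nonneg fun _ _ => sq_nonneg _
            positivity
          nlinarith [sq_nonneg Υ]
end
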